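/- arXiv:2604.14486 — 3 statements merged into one kernel-verified Lean document; each statement's English description precedes it below -/
import Mathlib

section
/- Fix y ∈ ℝ^d and a measurable g : ℝ^d → ℝ. Let f_V be a probability density on ℝ^d with characteristic function φ_V nonzero Lebesgue-almost everywhere, and suppose the function λ(x) = g(x) f_V(y − x) is continuous and vanishes at infinity. Then there exists a unique bounded linear functional T on A_V(ℝ^d) such that T[K_V[μ]] = ∫ λ dμ for every μ ∈ M(ℝ^d), and for every probability measure P_X on ℝ^d, writing f_Y = K_V[P_X], one has: T[f_Y] = ∫ g(x) f_V(y − x) dP_X(x), so that whenever f_Y(y) > 0 this integral is finite and T[f_Y]/f_Y(y) equals the posterior expectation ∫ g(x) f_V(y − x) dP_X(x) / f_Y(y) of g(X) given Y = y in the additive-noise model Y = X + V with X independent of V. -/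
open MeasureTheory Filter Topology

noncomputable section

abbrev Ed (d : ℕ) := EuclideanSpace ℝ (Fin d)

/-- Integral of a complex-valued function against a finite signed measure,
via the Jordan decomposition. -/
def sInt {d : ℕ} (μ : SignedMeasure (Ed d)) (f : Ed d → ℂ) : ℂ :=
  (∫ x, f x ∂μ.toJordanDecomposition.posPart) -
    ∫ x, f x ∂μ.toJordanDecomposition.negPart

/-- Total variation norm of a finite signed measure. -/
def tvNorm {d : ℕ} (μ : SignedMeasure (Ed d)) : ℝ :=
  (μ.totalVariation Set.univ).toReal

/-- Convolution operator `K_V[μ](y) = ∫ f_V (y - x) dμ(x)`. -/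
def KV {d : ℕ} (fV : Ed d → ℝ) (μ : SignedMeasure (Ed d)) : Ed d → ℂ :=
  fun y => sInt μ fun x => (fV (y - x) : ℂ)

/-- The class of `V`-admissible mixtures `A_V = {f_V * μ : μ ∈ M(ℝ^d)}`. -/
def AV {d : ℕ} (fV : Ed d → ℝ) : Set (Ed d → ℂ) :=
  {f | ∃ μ : SignedMeasure (Ed d), f = KV fV μ}

/-- Characteristic function `φ_V(ω) = ∫ e^{i⟨ω,v⟩} f_V(v) dv` of a density. -/
def charFn {d : ℕ} (fV : Ed d → ℝ) (ω : Ed d) : ℂ :=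
  ∫ v, Complex.exp (Complex.I * ((inner ℝ ω v : ℝ) : ℂ)) * (fV v : ℂ)

/-- `f_V` is a probability density on `ℝ^d`. -/
def IsDensity {d : ℕ} (fV : Ed d → ℝ) : Prop :=
  Measurable fV ∧ (∀ v, 0 ≤ fV v) ∧ Integrable fV ∧ ∫ v, fV v = 1

open FourierTransform Complex
open scoped RealInnerProductSpace Real

namespace TweedieAux
variable {d : ℕ}

/-- Fourier kernel matching mathlib's `fourierIntegral_eq'`. -/
def eK (ω v : Ed d) : ℂ := Complex.exp ((-2 * π * ⟪v, ω⟫ : ℝ) * Complex.I)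

lemma eK_norm (ω v : Ed d) : ‖eK ω v‖ = 1 := Complex.norm_exp_ofReal_mul_I _

lemma eK_add (ω x u : Ed d) : eK ω (x + u) = eK ω x * eK ω u := by
  unfold eK
  rw [inner_add_left, show (-2 * π * (⟪x,ω⟫ + ⟪u,ω⟫) : ℝ) = (-2*π*⟪x,ω⟫) + (-2*π*⟪u,ω⟫) by ring,
    Complex.ofReal_add, add_mul, Complex.exp_add]

lemma eK_cont_v (ω : Ed d) : Continuous fun v => eK ω v := by
  unfold eK
  exact Complex.continuous_exp.comp ((Complex.continuous_ofReal.comp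
    ((continuous_const.mul (continuous_id.inner continuous_const)))).mul continuous_const)

lemma eK_cont_ω (v : Ed d) : Continuous fun ω => eK ω v := by
  unfold eK
  exact Complex.continuous_exp.comp ((Complex.continuous_ofReal.comp
    ((continuous_const.mul (continuous_const.inner continuous_id)))).mul continuous_const)

lemma intoR {X : Type*} [MeasurableSpace X] (μ : Measure X) (f : X → ℝ) :
    ∫ x, ((f x : ℝ) : ℂ) ∂μ = ((∫ x, f x ∂μ : ℝ) : ℂ) := integral_ofReal

/-- Fourier-type transform of a finite measure. -/
def FT (M : Measure (Ed d)) (ω : Ed d) : ℂ := ∫ x, eK ω x ∂M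

lemma FT_cont (M : Measure (Ed d)) [IsFiniteMeasure M] : Continuous (FT M) := by
  apply continuous_of_dominated (bound := fun _ => (1:ℝ))
  · exact fun ω => (eK_cont_v ω).aestronglyMeasurable
  · exact fun ω => Filter.Eventually.of_forall fun x => le_of_eq (eK_norm ω x)
  · exact integrable_const _
  · exact Filter.Eventually.of_forall fun x => eK_cont_ω x


section Prod
variable {h : Ed d → ℝ} {M : Measure (Ed d)} [IsFiniteMeasure M]

/-- product integrability of `(x, z) ↦ h (z - x)` on `M.prod volume`. -/
lemma prodInt_swap (hm : Measurable h) (hi : Integrable h (volume : Measure (Ed d)))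
    (M : Measure (Ed d)) [IsFiniteMeasure M] : Integrable (fun p : Ed d × Ed d => h (p.2 - p.1)) (M.prod volume) := by
  have meas : AEStronglyMeasurable (fun p : Ed d × Ed d => h (p.2 - p.1)) (M.prod volume) :=
    (hm.comp (measurable_snd.sub measurable_fst)).aestronglyMeasurable
  rw [integrable_prod_iff meas]
  constructor
  · exact Filter.Eventually.of_forall fun x => hi.comp_sub_right x
  · have : (fun x : Ed d => ∫ z, ‖h (z - x)‖ ∂volume) = fun _ => ∫ z, ‖h z‖ ∂volume := by
      funext x
      exact integral_sub_right_eq_self (fun z => ‖h z‖) x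
    rw [this]
    exact integrable_const _

/-- product integrability of `(z, x) ↦ h (z - x)` on `volume.prod M`. -/
lemma prodInt (hm : Measurable h) (hi : Integrable h (volume : Measure (Ed d)))
    (M : Measure (Ed d)) [IsFiniteMeasure M] : Integrable (fun p : Ed d × Ed d => h (p.1 - p.2)) (volume.prod M) :=
  (prodInt_swap hm hi M).swap

lemma ae_section_int (hm : Measurable h) (hi : Integrable h (volume : Measure (Ed d)))
    (M : Measure (Ed d)) [IsFiniteMeasure M] : ∀ᵐ z ∂(volume : Measure (Ed d)),
    Integrable (fun x => h (z - x)) M :=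
  (prodInt hm hi M).prod_right_ae

lemma conv_integrable (hm : Measurable h) (hi : Integrable h (volume : Measure (Ed d)))
    (M : Measure (Ed d)) [IsFiniteMeasure M] : Integrable (fun z => ∫ x, h (z - x) ∂M) (volume : Measure (Ed d)) :=
  (prodInt hm hi M).integral_prod_left

lemma fourier_conv (hm : Measurable h) (hi : Integrable h (volume : Measure (Ed d)))
    (M : Measure (Ed d)) [IsFiniteMeasure M] (ω : Ed d) :
    ∫ z, eK ω z * ((∫ x, h (z - x) ∂M : ℝ) : ℂ) ∂(volume : Measure (Ed d))
      = (∫ v, eK ω v * (h v : ℂ) ∂(volume : Measure (Ed d))) * FT M ω := by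
  have step1 : ∀ z : Ed d, eK ω z * ((∫ x, h (z - x) ∂M : ℝ) : ℂ)
      = ∫ x, eK ω z * ((h (z - x) : ℝ) : ℂ) ∂M := by
    intro z
    rw [← intoR M (fun x => h (z - x)), ← integral_const_mul]
  have hint : Integrable (fun p : Ed d × Ed d => eK ω p.1 * ((h (p.1 - p.2) : ℝ) : ℂ))
      ((volume : Measure (Ed d)).prod M) := by
    refine Integrable.bdd_mul ((prodInt hm hi M).ofReal) ?_ (Filter.Eventually.of_forall fun p => le_of_eq (eK_norm ω p.1))
    exact ((eK_cont_v ω).comp continuous_fst).aestronglyMeasurable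
  have inner_eq : ∀ x : Ed d, (∫ z, eK ω z * ((h (z - x) : ℝ) : ℂ) ∂(volume : Measure (Ed d)))
      = eK ω x * ∫ v, eK ω v * (h v : ℂ) ∂(volume : Measure (Ed d)) := by
    intro x
    rw [← integral_add_right_eq_self (fun z => eK ω z * ((h (z - x) : ℝ) : ℂ)) x]
    simp only [add_sub_cancel_right, eK_add]
    have : ∀ z : Ed d, eK ω z * eK ω x * ((h z : ℝ) : ℂ) = eK ω x * (eK ω z * (h z : ℝ)) := by
      intro z; ring
    simp only [this]
    rw [integral_const_mul]
  calc ∫ z, eK ω z * ((∫ x, h (z - x) ∂M : ℝ) : ℂ) ∂(volume : Measure (Ed d))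
      = ∫ z, ∫ x, eK ω z * ((h (z - x) : ℝ) : ℂ) ∂M ∂(volume : Measure (Ed d)) := by
        simp only [step1]
    _ = ∫ x, ∫ z, eK ω z * ((h (z - x) : ℝ) : ℂ) ∂(volume : Measure (Ed d)) ∂M :=
        integral_integral_swap hint
    _ = ∫ x, eK ω x * ∫ v, eK ω v * (h v : ℂ) ∂(volume : Measure (Ed d)) ∂M := by
        simp only [inner_eq]
    _ = (∫ v, eK ω v * (h v : ℂ) ∂(volume : Measure (Ed d))) * FT M ω := by
        rw [integral_mul_const]; rw [mul_comm]; rfl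

end Prod


section CharFn
variable {fV : Ed d → ℝ}

lemma FfV_eq (fV : Ed d → ℝ) (ω : Ed d) :
    (∫ v, eK ω v * ((fV v : ℝ) : ℂ) ∂(volume : Measure (Ed d)))
      = charFn fV ((-(2*π)) • ω) := by
  unfold charFn eK
  congr 1
  funext v
  rw [show Complex.I * ((inner ℝ ((-(2*π)) • ω) v : ℝ) : ℂ)
      = ((-2 * π * ⟪v, ω⟫ : ℝ) : ℂ) * Complex.I by
    rw [real_inner_smul_left, real_inner_comm]; push_cast; ring]

lemma FfV_ne_ae (hφ : ∀ᵐ ω : Ed d ∂volume, charFn fV ω ≠ 0) :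
    ∀ᵐ ω : Ed d ∂volume, (∫ v, eK ω v * ((fV v : ℝ) : ℂ) ∂(volume : Measure (Ed d))) ≠ 0 := by
  rw [ae_iff] at hφ ⊢
  simp only [not_not] at hφ ⊢
  have hsub : {ω : Ed d | (∫ v, eK ω v * ((fV v : ℝ) : ℂ) ∂(volume : Measure (Ed d))) = 0}
      ⊆ (fun ω : Ed d => (-(2*π)) • ω) ⁻¹' {w : Ed d | charFn fV w = 0} := by
    intro ω hω
    simp only [Set.mem_setOf_eq] at hω
    simp only [Set.mem_preimage, Set.mem_setOf_eq]
    rw [← FfV_eq fV ω]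
    exact hω
  refine measure_mono_null hsub ?_
  rw [Measure.addHaar_preimage_smul volume (by simp [Real.pi_ne_zero] : (-(2*π) : ℝ) ≠ 0), hφ,
    mul_zero]

lemma charFn_cont (hfV : IsDensity fV) : Continuous (charFn fV) := by
  obtain ⟨hfm, hf0, hfi, -⟩ := hfV
  unfold charFn
  apply continuous_of_dominated (bound := fV)
  · intro ω
    exact ((Complex.continuous_exp.comp (continuous_const.mul
      (Complex.continuous_ofReal.comp (continuous_const.inner continuous_id)))).aestronglyMeasurable).mul
      ((Complex.measurable_ofReal.comp hfm).aestronglyMeasurable)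
  · intro ω
    refine Filter.Eventually.of_forall fun v => ?_
    rw [norm_mul, mul_comm Complex.I, Complex.norm_exp_ofReal_mul_I, one_mul, Complex.norm_real,
      Real.norm_eq_abs, _root_.abs_of_nonneg (hf0 v)]
  · exact hfi
  · refine Filter.Eventually.of_forall fun v => ?_
    exact (Complex.continuous_exp.comp (continuous_const.mul
      (Complex.continuous_ofReal.comp (continuous_id.inner continuous_const)))).mul continuous_const

end CharFn


section Star
variable {fV : Ed d → ℝ} {lam : Ed d → ℂ}

lemma star (hfV : IsDensity fV)
    (hφ : ∀ᵐ ω : Ed d ∂volume, charFn fV ω ≠ 0)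
    (hlc : Continuous lam) (hUC : UniformContinuous lam)
    {Mb : ℝ} (hMb : ∀ x, ‖lam x‖ ≤ Mb)
    (A B : Measure (Ed d)) [IsFiniteMeasure A] [IsFiniteMeasure B]
    (hAB : (fun z => ∫ x, fV (z - x) ∂A) =ᵐ[volume] (fun z => ∫ x, fV (z - x) ∂B)) :
    ∫ x, lam x ∂A = ∫ x, lam x ∂B := by
  obtain ⟨hfm, hf0, hfi, -⟩ := hfV
  have hMb0 : 0 ≤ Mb := le_trans (norm_nonneg _) (hMb 0)
  -- Step 1: the Fourier transforms of A and B agree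
  have hFTeq : FT A = FT B := by
    have h1 : ∀ ω : Ed d, (∫ v, eK ω v * ((fV v : ℝ) : ℂ) ∂(volume : Measure (Ed d))) * FT A ω
        = (∫ v, eK ω v * ((fV v : ℝ) : ℂ) ∂(volume : Measure (Ed d))) * FT B ω := by
      intro ω
      rw [← fourier_conv hfm hfi A ω, ← fourier_conv hfm hfi B ω]
      exact integral_congr_ae (hAB.mono fun z hz => by dsimp only at hz ⊢; rw [hz])
    have h2 : ∀ᵐ ω : Ed d ∂volume, FT A ω = FT B ω :=
      (FfV_ne_ae hφ).mono fun ω hω => mul_left_cancel₀ hω (h1 ω)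
    exact (Continuous.ae_eq_iff_eq volume (FT_cont A) (FT_cont B)).mp h2
  -- Step 2: for every ε > 0, the integrals differ by at most ε * (mass A + mass B)
  have keyeps : ∀ ε : ℝ, 0 < ε → ‖(∫ x, lam x ∂A) - ∫ x, lam x ∂B‖
      ≤ ε * ((A Set.univ).toReal + (B Set.univ).toReal) := by
    intro ε hε
    obtain ⟨δ, hδ, hδε⟩ := Metric.uniformContinuous_iff.mp hUC ε hε
    set χ : ContDiffBump (0 : Ed d) := ⟨δ/2, δ, by positivity, by linarith⟩ with hχ
    set χn : Ed d → ℝ := χ.normed volume with hχndef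
    have χcont : Continuous χn := χ.continuous_normed
    have χnn : ∀ w, 0 ≤ χn w := χ.nonneg_normed
    have χint1 : ∫ w, χn w ∂(volume : Measure (Ed d)) = 1 := χ.integral_normed
    have χcs : HasCompactSupport χn := χ.hasCompactSupport_normed
    have χintble : Integrable χn (volume : Measure (Ed d)) :=
      χcont.integrable_of_hasCompactSupport χcs
    have χmeas : Measurable χn := χcont.measurable
    have χsupp : Function.support χn = Metric.ball 0 δ := χ.support_normed_eq
    obtain ⟨w0, hw0⟩ := χcont.exists_forall_ge_of_hasCompactSupport χcs
    set Cχ : ℝ := χn w0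
    -- the smoothed measures' densities
    set gA : Ed d → ℝ := fun z => ∫ x, χn (z - x) ∂A with hgA
    set gB : Ed d → ℝ := fun z => ∫ x, χn (z - x) ∂B with hgB
    have gAint : Integrable gA (volume : Measure (Ed d)) := conv_integrable χmeas χintble A
    have gBint : Integrable gB (volume : Measure (Ed d)) := conv_integrable χmeas χintble B
    have gcont : ∀ (M : Measure (Ed d)) [IsFiniteMeasure M],
        Continuous fun z => ∫ x, χn (z - x) ∂M := by
      intro M _
      apply continuous_of_dominated (bound := fun _ => Cχ)
      · intro z
        exact (χcont.comp (continuous_const.sub continuous_id)).aestronglyMeasurable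
      · intro z
        refine Filter.Eventually.of_forall fun x => ?_
        rw [Real.norm_eq_abs, _root_.abs_of_nonneg (χnn _)]
        exact hw0 _
      · exact integrable_const _
      · exact Filter.Eventually.of_forall fun x =>
          χcont.comp (continuous_id.sub continuous_const)
    have gAcont : Continuous gA := gcont A
    have gBcont : Continuous gB := gcont B
    -- the smoothed densities agree
    have hgAB : gA = gB := by
      set h2 : Ed d → ℂ := fun z => ((gA z - gB z : ℝ) : ℂ) with hh2
      have hint : Integrable h2 (volume : Measure (Ed d)) := (gAint.sub gBint).ofReal
      have hcont : Continuous h2 := Complex.continuous_ofReal.comp (gAcont.sub gBcont)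
      have int1 : ∀ (ω : Ed d) (G : Ed d → ℝ), Integrable G (volume : Measure (Ed d)) →
          Integrable (fun v => eK ω v * ((G v : ℝ) : ℂ)) (volume : Measure (Ed d)) := by
        intro ω G hG
        exact Integrable.bdd_mul hG.ofReal (eK_cont_v ω).aestronglyMeasurable
          (Filter.Eventually.of_forall fun v => le_of_eq (eK_norm ω v))
      have hFT0 : 𝓕 h2 = 0 := by
        funext ω
        rw [Real.fourier_eq']
        simp only [smul_eq_mul]
        have hsplit : ∀ v : Ed d, Complex.exp (((-2 * π * ⟪v, ω⟫ : ℝ) : ℂ) * Complex.I) * h2 v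
            = eK ω v * ((gA v : ℝ) : ℂ) - eK ω v * ((gB v : ℝ) : ℂ) := by
          intro v
          rw [hh2]
          simp only [Complex.ofReal_sub, eK]
          ring
        simp only [hsplit]
        rw [integral_sub (int1 ω gA gAint) (int1 ω gB gBint), hgA, hgB,
          fourier_conv χmeas χintble A ω, fourier_conv χmeas χintble B ω, hFTeq, sub_self,
          Pi.zero_apply]
      have hinv := hcont.fourierInv_fourier_eq hint (by rw [hFT0]; exact integrable_zero _ _ _)
      rw [hFT0] at hinv
      have hzero : ∀ z, h2 z = 0 := by
        intro z
        rw [← hinv]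
        rw [Real.fourierInv_eq]
        simp
      funext z
      have := hzero z
      rw [hh2] at this
      simpa [sub_eq_zero, Complex.ofReal_eq_zero, Complex.ofReal_sub] using this
    -- the mollified lam
    set lamχ : Ed d → ℂ := fun x => ∫ w, lam (w + x) * ((χn w : ℝ) : ℂ) ∂(volume : Measure (Ed d))
      with hlamχ
    have lamχ_eq : ∀ x : Ed d, lamχ x
        = ∫ z, lam z * ((χn (z - x) : ℝ) : ℂ) ∂(volume : Measure (Ed d)) := by
      intro x
      rw [hlamχ]
      rw [← integral_add_right_eq_self (fun z => lam z * ((χn (z - x) : ℝ) : ℂ)) x]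
      simp only [add_sub_cancel_right]
    have lamχ_cont : Continuous lamχ := by
      apply continuous_of_dominated (bound := fun w => Mb * χn w)
      · intro x
        exact ((hlc.comp (continuous_id.add continuous_const)).mul
          (Complex.continuous_ofReal.comp χcont)).aestronglyMeasurable
      · intro x
        refine Filter.Eventually.of_forall fun w => ?_
        rw [norm_mul, Complex.norm_real, Real.norm_eq_abs, _root_.abs_of_nonneg (χnn _)]
        exact mul_le_mul_of_nonneg_right (hMb _) (χnn _)
      · exact χintble.const_mul Mb
      · refine Filter.Eventually.of_forall fun w => ?_
        exact (hlc.comp (continuous_const.add continuous_id)).mul continuous_const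
    have int_lam_chi : ∀ x : Ed d,
        Integrable (fun w => lam (w + x) * ((χn w : ℝ) : ℂ)) (volume : Measure (Ed d)) := by
      intro x
      refine Integrable.bdd_mul χintble.ofReal ?_ (Filter.Eventually.of_forall fun w => hMb _)
      exact (hlc.comp (continuous_id.add continuous_const)).aestronglyMeasurable
    have lamχ_bound : ∀ x, ‖lamχ x‖ ≤ Mb := by
      intro x
      rw [hlamχ]
      calc ‖∫ w, lam (w + x) * ((χn w : ℝ) : ℂ) ∂(volume : Measure (Ed d))‖
          ≤ ∫ w, ‖lam (w + x) * ((χn w : ℝ) : ℂ)‖ ∂(volume : Measure (Ed d)) :=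
            norm_integral_le_integral_norm _
        _ ≤ ∫ w, Mb * χn w ∂(volume : Measure (Ed d)) := by
            refine integral_mono (int_lam_chi x).norm (χintble.const_mul Mb) fun w => ?_
            rw [norm_mul, Complex.norm_real, Real.norm_eq_abs, _root_.abs_of_nonneg (χnn _)]
            exact mul_le_mul_of_nonneg_right (hMb _) (χnn _)
        _ = Mb := by rw [integral_const_mul, χint1, mul_one]
    have lamχ_close : ∀ x : Ed d, ‖lam x - lamχ x‖ ≤ ε := by
      intro x
      have h1 : lam x - lamχ x
          = ∫ w, (lam x - lam (w + x)) * ((χn w : ℝ) : ℂ) ∂(volume : Measure (Ed d)) := by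
        have e1 : ∫ w, (lam x - lam (w + x)) * ((χn w : ℝ) : ℂ) ∂(volume : Measure (Ed d))
            = (∫ w, lam x * ((χn w : ℝ) : ℂ) ∂(volume : Measure (Ed d)))
              - ∫ w, lam (w + x) * ((χn w : ℝ) : ℂ) ∂(volume : Measure (Ed d)) := by
          have hA : Integrable (fun w : Ed d => lam x * ((χn w : ℝ) : ℂ))
              (volume : Measure (Ed d)) := by
            refine Integrable.bdd_mul χintble.ofReal ?_ (Filter.Eventually.of_forall fun w => le_rfl)
            exact aestronglyMeasurable_const
          rw [← integral_sub hA (int_lam_chi x)]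
          congr 1
          funext w
          ring
        rw [e1, hlamχ, integral_const_mul, intoR (volume : Measure (Ed d)) χn, χint1,
          Complex.ofReal_one, mul_one]
      rw [h1]
      have hnorm_int : Integrable (fun w => ‖lam x - lam (w + x)‖ * χn w)
          (volume : Measure (Ed d)) := by
        refine Integrable.bdd_mul χintble ?_ (c := 2 * Mb) (Filter.Eventually.of_forall fun w => ?_)
        · exact ((continuous_const.sub
            (hlc.comp (continuous_id.add continuous_const))).norm).aestronglyMeasurable
        · rw [Real.norm_eq_abs, abs_norm]
          calc ‖lam x - lam (w + x)‖ ≤ ‖lam x‖ + ‖lam (w + x)‖ := norm_sub_le _ _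
            _ ≤ 2 * Mb := by have := hMb x; have := hMb (w + x); linarith
      calc ‖∫ w, (lam x - lam (w + x)) * ((χn w : ℝ) : ℂ) ∂(volume : Measure (Ed d))‖
          ≤ ∫ w, ‖(lam x - lam (w + x)) * ((χn w : ℝ) : ℂ)‖ ∂(volume : Measure (Ed d)) :=
            norm_integral_le_integral_norm _
        _ = ∫ w, ‖lam x - lam (w + x)‖ * χn w ∂(volume : Measure (Ed d)) := by
            refine integral_congr_ae (Filter.Eventually.of_forall fun w => ?_)
            dsimp only
            rw [norm_mul, Complex.norm_real, Real.norm_eq_abs, _root_.abs_of_nonneg (χnn _)]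
        _ ≤ ∫ w, ε * χn w ∂(volume : Measure (Ed d)) := by
            refine integral_mono hnorm_int (χintble.const_mul ε) fun w => ?_
            by_cases hw : χn w = 0
            · simp [hw]
            · have hwsupp : w ∈ Function.support χn := hw
              rw [χsupp, Metric.mem_ball, dist_zero_right] at hwsupp
              have hdist : dist (w + x) x < δ := by
                rw [dist_eq_norm, add_sub_cancel_right]
                exact hwsupp
              have := hδε hdist
              rw [dist_eq_norm] at this
              have hle : ‖lam x - lam (w + x)‖ ≤ ε := by
                rw [norm_sub_rev]
                exact le_of_lt this
              exact mul_le_mul_of_nonneg_right hle (χnn _)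
        _ = ε := by rw [integral_const_mul, χint1, mul_one]
    -- pairing
    have pair : ∀ (M : Measure (Ed d)) [IsFiniteMeasure M],
        ∫ x, lamχ x ∂M
          = ∫ z, lam z * ((∫ x, χn (z - x) ∂M : ℝ) : ℂ) ∂(volume : Measure (Ed d)) := by
      intro M _
      have hintprod : Integrable (fun p : Ed d × Ed d => lam p.2 * ((χn (p.2 - p.1) : ℝ) : ℂ))
          (M.prod (volume : Measure (Ed d))) := by
        refine Integrable.bdd_mul ((prodInt_swap χmeas χintble M).ofReal) ?_ (Filter.Eventually.of_forall fun p => hMb _)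
        exact (hlc.comp continuous_snd).aestronglyMeasurable
      calc ∫ x, lamχ x ∂M
          = ∫ x, ∫ z, lam z * ((χn (z - x) : ℝ) : ℂ) ∂(volume : Measure (Ed d)) ∂M := by
            refine integral_congr_ae (Filter.Eventually.of_forall fun x => ?_)
            exact lamχ_eq x
        _ = ∫ z, ∫ x, lam z * ((χn (z - x) : ℝ) : ℂ) ∂M ∂(volume : Measure (Ed d)) :=
            integral_integral_swap hintprod
        _ = ∫ z, lam z * ((∫ x, χn (z - x) ∂M : ℝ) : ℂ) ∂(volume : Measure (Ed d)) := by
            refine integral_congr_ae (Filter.Eventually.of_forall fun z => ?_)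
            dsimp only
            rw [integral_const_mul, intoR M (fun x => χn (z - x))]
    have pairEq : ∫ x, lamχ x ∂A = ∫ x, lamχ x ∂B := by
      rw [pair A, pair B]
      refine integral_congr_ae (Filter.Eventually.of_forall fun z => ?_)
      exact congrArg (fun t : ℝ => lam z * ((t : ℝ) : ℂ)) (congrFun hgAB z)
    have int_lam_M : ∀ (M : Measure (Ed d)) [IsFiniteMeasure M], Integrable lam M := by
      intro M _
      exact Integrable.mono' (integrable_const Mb) hlc.aestronglyMeasurable
        (Filter.Eventually.of_forall hMb)
    have int_lamχ_M : ∀ (M : Measure (Ed d)) [IsFiniteMeasure M], Integrable lamχ M := by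
      intro M _
      exact Integrable.mono' (integrable_const Mb) lamχ_cont.aestronglyMeasurable
        (Filter.Eventually.of_forall lamχ_bound)
    have hsplit : (∫ x, lam x ∂A) - ∫ x, lam x ∂B
        = (∫ x, (lam x - lamχ x) ∂A) - ∫ x, (lam x - lamχ x) ∂B := by
      rw [integral_sub (int_lam_M A) (int_lamχ_M A), integral_sub (int_lam_M B) (int_lamχ_M B)]
      linear_combination pairEq
    rw [hsplit]
    have hb : ∀ (M : Measure (Ed d)) [IsFiniteMeasure M],
        ∫ x, ‖lam x - lamχ x‖ ∂M ≤ ε * (M Set.univ).toReal := by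
      intro M _
      calc ∫ x, ‖lam x - lamχ x‖ ∂M ≤ ∫ _x, ε ∂M :=
            integral_mono ((int_lam_M M).sub (int_lamχ_M M)).norm (integrable_const _)
              fun x => lamχ_close x
        _ = ε * (M Set.univ).toReal := by rw [integral_const, smul_eq_mul, mul_comm, measureReal_def]
    calc ‖(∫ x, (lam x - lamχ x) ∂A) - ∫ x, (lam x - lamχ x) ∂B‖
        ≤ ‖∫ x, (lam x - lamχ x) ∂A‖ + ‖∫ x, (lam x - lamχ x) ∂B‖ := norm_sub_le _ _
      _ ≤ (∫ x, ‖lam x - lamχ x‖ ∂A) + ∫ x, ‖lam x - lamχ x‖ ∂B :=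
          add_le_add (norm_integral_le_integral_norm _) (norm_integral_le_integral_norm _)
      _ ≤ ε * (A Set.univ).toReal + ε * (B Set.univ).toReal := add_le_add (hb A) (hb B)
      _ = ε * ((A Set.univ).toReal + (B Set.univ).toReal) := by ring
  -- conclude
  by_contra hne
  have hDpos : 0 < ‖(∫ x, lam x ∂A) - ∫ x, lam x ∂B‖ :=
    norm_pos_iff.mpr (sub_ne_zero.mpr hne)
  set nD := ‖(∫ x, lam x ∂A) - ∫ x, lam x ∂B‖ with hnD
  set C := (A Set.univ).toReal + (B Set.univ).toReal with hCdef
  have hC0 : 0 ≤ C := by positivity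
  have h1 := keyeps (nD / (2 * (C + 1))) (by positivity)
  have h2 : nD / (2 * (C + 1)) * C < nD := by
    rw [div_mul_eq_mul_div, div_lt_iff₀ (by positivity)]
    nlinarith
  linarith

end Star

section Key
variable {fV : Ed d → ℝ} {lam : Ed d → ℂ}

lemma isFiniteMeasure_ofReal_smul (c : ℝ) (M : Measure (Ed d)) [IsFiniteMeasure M] :
    IsFiniteMeasure (ENNReal.ofReal c • M) := by
  constructor
  rw [Measure.smul_apply, smul_eq_mul]
  exact ENNReal.mul_lt_top ENNReal.ofReal_lt_top (measure_lt_top M _)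

/-- difference of the convolutions of the Jordan parts. -/
def rz (fV : Ed d → ℝ) (μ : SignedMeasure (Ed d)) (z : Ed d) : ℝ :=
  (∫ x, fV (z - x) ∂μ.toJordanDecomposition.posPart) -
    ∫ x, fV (z - x) ∂μ.toJordanDecomposition.negPart

lemma max_sub_max_neg (c : ℝ) : max c 0 - max (-c) 0 = c := by
  rcases le_total 0 c with hc | hc
  · rw [max_eq_left hc, max_eq_right (neg_nonpos.mpr hc), sub_zero]
  · rw [max_eq_right hc, max_eq_left (neg_nonneg.mpr hc), zero_sub, neg_neg]

lemma key (hfV : IsDensity fV)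
    (hφ : ∀ᵐ ω : Ed d ∂volume, charFn fV ω ≠ 0)
    (hlc : Continuous lam) (hUC : UniformContinuous lam)
    {Mb : ℝ} (hMb : ∀ x, ‖lam x‖ ≤ Mb)
    (c₁ c₂ : ℝ) (μ₁ μ₂ ν : SignedMeasure (Ed d))
    (h : ∀ z : Ed d, rz fV ν z = c₁ * rz fV μ₁ z + c₂ * rz fV μ₂ z) :
    sInt ν lam = (c₁ : ℂ) * sInt μ₁ lam + (c₂ : ℂ) * sInt μ₂ lam := by
  have hfm := hfV.1
  have hfi := hfV.2.2.1
  set P0 := ν.toJordanDecomposition.posPart with hP0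
  set N0 := ν.toJordanDecomposition.negPart with hN0
  set P1 := μ₁.toJordanDecomposition.posPart with hP1
  set N1 := μ₁.toJordanDecomposition.negPart with hN1
  set P2 := μ₂.toJordanDecomposition.posPart with hP2
  set N2 := μ₂.toJordanDecomposition.negPart with hN2
  set a1 := max c₁ 0 with ha1def
  set b1 := max (-c₁) 0 with hb1def
  set a2 := max c₂ 0 with ha2def
  set b2 := max (-c₂) 0 with hb2def
  have ha1 : 0 ≤ a1 := le_max_right _ _
  have hb1 : 0 ≤ b1 := le_max_right _ _
  have ha2 : 0 ≤ a2 := le_max_right _ _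
  have hb2 : 0 ≤ b2 := le_max_right _ _
  have hc1 : a1 - b1 = c₁ := max_sub_max_neg c₁
  have hc2 : a2 - b2 = c₂ := max_sub_max_neg c₂
  set A : Measure (Ed d) := P0 + (ENNReal.ofReal b1 • P1 + (ENNReal.ofReal a1 • N1 +
    (ENNReal.ofReal b2 • P2 + ENNReal.ofReal a2 • N2))) with hAdef
  set B : Measure (Ed d) := N0 + (ENNReal.ofReal a1 • P1 + (ENNReal.ofReal b1 • N1 +
    (ENNReal.ofReal a2 • P2 + ENNReal.ofReal b2 • N2))) with hBdef
  haveI := isFiniteMeasure_ofReal_smul a1 P1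
  haveI := isFiniteMeasure_ofReal_smul b1 P1
  haveI := isFiniteMeasure_ofReal_smul a1 N1
  haveI := isFiniteMeasure_ofReal_smul b1 N1
  haveI := isFiniteMeasure_ofReal_smul a2 P2
  haveI := isFiniteMeasure_ofReal_smul b2 P2
  haveI := isFiniteMeasure_ofReal_smul a2 N2
  haveI := isFiniteMeasure_ofReal_smul b2 N2
  haveI : IsFiniteMeasure A := by rw [hAdef]; infer_instance
  haveI : IsFiniteMeasure B := by rw [hBdef]; infer_instance
  have hAB : (fun z => ∫ x, fV (z - x) ∂A) =ᵐ[(volume : Measure (Ed d))]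
      (fun z => ∫ x, fV (z - x) ∂B) := by
    filter_upwards [ae_section_int hfm hfi P0, ae_section_int hfm hfi N0,
      ae_section_int hfm hfi P1, ae_section_int hfm hfi N1,
      ae_section_int hfm hfi P2, ae_section_int hfm hfi N2]
      with z h0p h0n h1p h1n h2p h2n
    have hzeq := h z
    rw [rz, rz, rz, ← hP0, ← hN0, ← hP1, ← hN1, ← hP2, ← hN2] at hzeq
    rw [hAdef, hBdef]
    rw [integral_add_measure h0p (((h1p.smul_measure ENNReal.ofReal_ne_top).add_measure
        ((h1n.smul_measure ENNReal.ofReal_ne_top).add_measure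
        ((h2p.smul_measure ENNReal.ofReal_ne_top).add_measure
        (h2n.smul_measure ENNReal.ofReal_ne_top))))),
      integral_add_measure (h1p.smul_measure ENNReal.ofReal_ne_top)
        ((h1n.smul_measure ENNReal.ofReal_ne_top).add_measure
        ((h2p.smul_measure ENNReal.ofReal_ne_top).add_measure
        (h2n.smul_measure ENNReal.ofReal_ne_top))),
      integral_add_measure (h1n.smul_measure ENNReal.ofReal_ne_top)
        ((h2p.smul_measure ENNReal.ofReal_ne_top).add_measure
        (h2n.smul_measure ENNReal.ofReal_ne_top)),
      integral_add_measure (h2p.smul_measure ENNReal.ofReal_ne_top)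
        (h2n.smul_measure ENNReal.ofReal_ne_top),
      integral_add_measure h0n (((h1p.smul_measure ENNReal.ofReal_ne_top).add_measure
        ((h1n.smul_measure ENNReal.ofReal_ne_top).add_measure
        ((h2p.smul_measure ENNReal.ofReal_ne_top).add_measure
        (h2n.smul_measure ENNReal.ofReal_ne_top))))),
      integral_add_measure (h1p.smul_measure ENNReal.ofReal_ne_top)
        ((h1n.smul_measure ENNReal.ofReal_ne_top).add_measure
        ((h2p.smul_measure ENNReal.ofReal_ne_top).add_measure
        (h2n.smul_measure ENNReal.ofReal_ne_top))),
      integral_add_measure (h1n.smul_measure ENNReal.ofReal_ne_top)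
        ((h2p.smul_measure ENNReal.ofReal_ne_top).add_measure
        (h2n.smul_measure ENNReal.ofReal_ne_top)),
      integral_add_measure (h2p.smul_measure ENNReal.ofReal_ne_top)
        (h2n.smul_measure ENNReal.ofReal_ne_top)]
    simp only [integral_smul_measure, ENNReal.toReal_ofReal ha1, ENNReal.toReal_ofReal hb1,
      ENNReal.toReal_ofReal ha2, ENNReal.toReal_ofReal hb2, smul_eq_mul]
    rw [← hc1, ← hc2] at hzeq
    ring_nf at hzeq ⊢
    linarith
  have hstar := star ⟨hfV.1, hfV.2.1, hfV.2.2.1, hfV.2.2.2⟩ hφ hlc hUC hMb A B hAB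
  have int_lam : ∀ (M : Measure (Ed d)) [IsFiniteMeasure M], Integrable lam M := by
    intro M _
    exact Integrable.mono' (integrable_const Mb) hlc.aestronglyMeasurable
      (Filter.Eventually.of_forall hMb)
  rw [hAdef, hBdef] at hstar
  rw [integral_add_measure (int_lam P0) (((int_lam _).add_measure
      ((int_lam _).add_measure ((int_lam _).add_measure (int_lam _))))),
    integral_add_measure (int_lam _) ((int_lam _).add_measure
      ((int_lam _).add_measure (int_lam _))),
    integral_add_measure (int_lam _) ((int_lam _).add_measure (int_lam _)),
    integral_add_measure (int_lam _) (int_lam _),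
    integral_add_measure (int_lam N0) (((int_lam _).add_measure
      ((int_lam _).add_measure ((int_lam _).add_measure (int_lam _))))),
    integral_add_measure (int_lam (ENNReal.ofReal a1 • P1)) ((int_lam _).add_measure
      ((int_lam _).add_measure (int_lam _))),
    integral_add_measure (int_lam (ENNReal.ofReal b1 • N1))
      ((int_lam _).add_measure (int_lam _)),
    integral_add_measure (int_lam (ENNReal.ofReal a2 • P2)) (int_lam _)] at hstar
  simp only [integral_smul_measure, ENNReal.toReal_ofReal ha1, ENNReal.toReal_ofReal hb1,
    ENNReal.toReal_ofReal ha2, ENNReal.toReal_ofReal hb2, Complex.real_smul] at hstar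
  have hc1C : (a1 : ℂ) - (b1 : ℂ) = (c₁ : ℂ) := by exact_mod_cast hc1
  have hc2C : (a2 : ℂ) - (b2 : ℂ) = (c₂ : ℂ) := by exact_mod_cast hc2
  rw [sInt, sInt, sInt, ← hP0, ← hN0, ← hP1, ← hN1, ← hP2, ← hN2]
  linear_combination hstar + ((∫ x, lam x ∂P1) - ∫ x, lam x ∂N1) * hc1C
    + ((∫ x, lam x ∂P2) - ∫ x, lam x ∂N2) * hc2C

end Key

end TweedieAux

open TweedieAux Complex in
/-- Existence and uniqueness of the Tweedie functional: for fixed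
`y` and measurable `g`, if `λ(x) = g(x) f_V(y - x)` is continuous and vanishes at
infinity, there is a unique bounded linear functional `T` on `A_V(ℝ^d)` with
`T[K_V[μ]] = ∫ λ dμ`; for any latent probability law `P_X`, with `f_Y = K_V[P_X]`,
`T[f_Y] = ∫ g(x) f_V(y - x) dP_X(x)`, and whenever `f_Y(y) > 0` this integral is
finite and `T[f_Y]/f_Y(y)` is the posterior expectation of `g(X)` given `Y = y`. -/
theorem tweedie_stmt3 {d : ℕ} (y : Ed d) (g : Ed d → ℝ) (hg : Measurable g)
    (fV : Ed d → ℝ) (hfV : IsDensity fV)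
    (hφ : ∀ᵐ ω : Ed d ∂volume, charFn fV ω ≠ 0)
    (lam : Ed d → ℂ) (hlam_def : lam = fun x => ((g x * fV (y - x) : ℝ) : ℂ))
    (hlam_cont : Continuous lam)
    (hlam_c0 : Tendsto lam (cocompact (Ed d)) (𝓝 0)) :
    ∃ T : AV fV → ℂ,
      (∀ μ : SignedMeasure (Ed d), T ⟨KV fV μ, ⟨μ, rfl⟩⟩ = sInt μ lam) ∧
      (∀ (f f' : AV fV) (a b : ℂ)
          (h : (fun z => a * (f : Ed d → ℂ) z + b * (f' : Ed d → ℂ) z) ∈ AV fV),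
        T ⟨fun z => a * (f : Ed d → ℂ) z + b * (f' : Ed d → ℂ) z, h⟩
          = a * T f + b * T f') ∧
      (∀ μ : SignedMeasure (Ed d),
        ‖T ⟨KV fV μ, ⟨μ, rfl⟩⟩‖ ≤ (⨆ x : Ed d, ‖lam x‖) * tvNorm μ) ∧
      (∀ T' : AV fV → ℂ,
        (∀ μ : SignedMeasure (Ed d), T' ⟨KV fV μ, ⟨μ, rfl⟩⟩ = sInt μ lam) → T' = T) ∧
      (∀ (PX : Measure (Ed d)) [IsProbabilityMeasure PX],
        T ⟨KV fV PX.toSignedMeasure, ⟨PX.toSignedMeasure, rfl⟩⟩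
            = ((∫ x, g x * fV (y - x) ∂PX : ℝ) : ℂ) ∧
        (0 < (∫ x, fV (y - x) ∂PX) →
          Integrable (fun x => g x * fV (y - x)) PX ∧
          T ⟨KV fV PX.toSignedMeasure, ⟨PX.toSignedMeasure, rfl⟩⟩
              / ((∫ x, fV (y - x) ∂PX : ℝ) : ℂ)
            = ((∫ x, g x * fV (y - x) ∂PX : ℝ) : ℂ)
              / ((∫ x, fV (y - x) ∂PX : ℝ) : ℂ))) := by
  classical
  -- boundedness and uniform continuity of lam
  have hUC : UniformContinuous lam := hlam_cont.uniformContinuous_of_tendsto_cocompact hlam_c0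
  set F : ZeroAtInftyContinuousMap (Ed d) ℂ :=
    { toContinuousMap := ⟨lam, hlam_cont⟩, zero_at_infty' := hlam_c0 } with hF
  set Mb : ℝ := ‖F.toBCF‖ with hMb0
  have hMb : ∀ x, ‖lam x‖ ≤ Mb := fun x => F.toBCF.norm_coe_le_norm x
  have hBdd : BddAbove (Set.range fun x : Ed d => ‖lam x‖) :=
    ⟨Mb, by rintro r ⟨x, rfl⟩; exact hMb x⟩
  have hsup_le : ∀ x : Ed d, ‖lam x‖ ≤ ⨆ x : Ed d, ‖lam x‖ := fun x => le_ciSup hBdd x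
  -- value lemma for KV
  have hKV : ∀ (μ : SignedMeasure (Ed d)) (z : Ed d), KV fV μ z = ((rz fV μ z : ℝ) : ℂ) := by
    intro μ z
    rw [KV, sInt, rz, Complex.ofReal_sub,
      intoR μ.toJordanDecomposition.posPart (fun x => fV (z - x)),
      intoR μ.toJordanDecomposition.negPart (fun x => fV (z - x))]
  -- well-definedness
  have welldef : ∀ μ μ' : SignedMeasure (Ed d), KV fV μ = KV fV μ' →
      sInt μ lam = sInt μ' lam := by
    intro μ μ' hμ
    have h := key hfV hφ hlam_cont hUC hMb 1 0 μ' μ' μ (fun z => ?_)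
    · simpa using h
    · have : ((rz fV μ z : ℝ) : ℂ) = ((rz fV μ' z : ℝ) : ℂ) := by
        rw [← hKV μ z, ← hKV μ' z, hμ]
      have := Complex.ofReal_injective this
      rw [this]; ring
  -- sInt of the zero signed measure
  have sInt_zero : sInt (0 : SignedMeasure (Ed d)) lam = 0 := by
    rw [sInt, SignedMeasure.toJordanDecomposition_zero]
    simp
  have rz_zero : ∀ z : Ed d, rz fV (0 : SignedMeasure (Ed d)) z = 0 := by
    intro z
    rw [rz, SignedMeasure.toJordanDecomposition_zero]
    simp
  -- the functional
  set T : AV fV → ℂ := fun f => sInt (Classical.choose f.2) lam with hT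
  have hT1 : ∀ μ : SignedMeasure (Ed d), T ⟨KV fV μ, ⟨μ, rfl⟩⟩ = sInt μ lam := by
    intro μ
    have hspec : KV fV μ = KV fV (Classical.choose (⟨μ, rfl⟩ :
        ∃ ν : SignedMeasure (Ed d), KV fV μ = KV fV ν)) :=
      Classical.choose_spec (⟨μ, rfl⟩ : ∃ ν : SignedMeasure (Ed d), KV fV μ = KV fV ν)
    exact welldef _ _ hspec.symm
  refine ⟨T, hT1, ?_, ?_, ?_, ?_⟩
  · -- linearity
    intro f f' a b hcomb
    obtain ⟨val, μf, hμf⟩ := f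
    obtain ⟨val', μf', hμf'⟩ := f'
    obtain ⟨ν, hν⟩ := hcomb
    have hTf : T ⟨val, ⟨μf, hμf⟩⟩ = sInt μf lam := by
      have : (⟨val, ⟨μf, hμf⟩⟩ : AV fV) = ⟨KV fV μf, ⟨μf, rfl⟩⟩ := Subtype.ext hμf
      rw [this, hT1]
    have hTf' : T ⟨val', ⟨μf', hμf'⟩⟩ = sInt μf' lam := by
      have : (⟨val', ⟨μf', hμf'⟩⟩ : AV fV) = ⟨KV fV μf', ⟨μf', rfl⟩⟩ := Subtype.ext hμf'
      rw [this, hT1]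
    have hTc : T ⟨fun z => a * val z + b * val' z, ⟨ν, hν⟩⟩ = sInt ν lam := by
      have : (⟨fun z => a * val z + b * val' z, ⟨ν, hν⟩⟩ : AV fV) = ⟨KV fV ν, ⟨ν, rfl⟩⟩ :=
        Subtype.ext hν
      rw [this, hT1]
    simp only [Subtype.coe_mk]
    rw [hTc, hTf, hTf']
    -- pointwise complex equation
    have hzc : ∀ z : Ed d, ((rz fV ν z : ℝ) : ℂ)
        = a * ((rz fV μf z : ℝ) : ℂ) + b * ((rz fV μf' z : ℝ) : ℂ) := by
      intro z
      rw [← hKV ν z, ← hKV μf z, ← hKV μf' z, ← hν]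
      have h1 : val z = KV fV μf z := congrFun hμf z
      have h2 : val' z = KV fV μf' z := congrFun hμf' z
      rw [← h1, ← h2]
    have hre : ∀ z : Ed d, rz fV ν z = a.re * rz fV μf z + b.re * rz fV μf' z := by
      intro z
      have := congrArg Complex.re (hzc z)
      simpa [Complex.mul_re] using this
    have him : ∀ z : Ed d, rz fV (0 : SignedMeasure (Ed d)) z
        = a.im * rz fV μf z + b.im * rz fV μf' z := by
      intro z
      have := congrArg Complex.im (hzc z)
      rw [rz_zero z]
      simpa [Complex.mul_im] using this
    have eq1 := key hfV hφ hlam_cont hUC hMb a.re b.re μf μf' ν hre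
    have eq2 := key hfV hφ hlam_cont hUC hMb a.im b.im μf μf' 0 him
    rw [sInt_zero] at eq2
    linear_combination eq1 + Complex.I * eq2 + sInt μf lam * (Complex.re_add_im a)
      + sInt μf' lam * (Complex.re_add_im b)
  · -- norm bound
    intro μ
    rw [hT1 μ]
    set P := μ.toJordanDecomposition.posPart with hP
    set N := μ.toJordanDecomposition.negPart with hN
    have int_lam : ∀ (M : Measure (Ed d)) [IsFiniteMeasure M], Integrable lam M := by
      intro M _
      exact Integrable.mono' (integrable_const Mb) hlam_cont.aestronglyMeasurable
        (Filter.Eventually.of_forall hMb)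
    have hbnd : ∀ (M : Measure (Ed d)) [IsFiniteMeasure M],
        ‖∫ x, lam x ∂M‖ ≤ (⨆ x : Ed d, ‖lam x‖) * (M Set.univ).toReal := by
      intro M _
      calc ‖∫ x, lam x ∂M‖ ≤ ∫ x, ‖lam x‖ ∂M := norm_integral_le_integral_norm _
        _ ≤ ∫ _x, ⨆ x : Ed d, ‖lam x‖ ∂M :=
            integral_mono (int_lam M).norm (integrable_const _) hsup_le
        _ = (⨆ x : Ed d, ‖lam x‖) * (M Set.univ).toReal := by
            rw [integral_const, smul_eq_mul, mul_comm, measureReal_def]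
    have htv : tvNorm μ = (P Set.univ).toReal + (N Set.univ).toReal := by
      rw [tvNorm, SignedMeasure.totalVariation, Measure.add_apply,
        ENNReal.toReal_add (measure_ne_top _ _) (measure_ne_top _ _)]
    calc ‖sInt μ lam‖ = ‖(∫ x, lam x ∂P) - ∫ x, lam x ∂N‖ := rfl
      _ ≤ ‖∫ x, lam x ∂P‖ + ‖∫ x, lam x ∂N‖ := norm_sub_le _ _
      _ ≤ (⨆ x : Ed d, ‖lam x‖) * (P Set.univ).toReal
          + (⨆ x : Ed d, ‖lam x‖) * (N Set.univ).toReal := add_le_add (hbnd P) (hbnd N)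
      _ = (⨆ x : Ed d, ‖lam x‖) * tvNorm μ := by rw [htv]; ring
  · -- uniqueness
    intro T' hT'
    funext f
    obtain ⟨val, hval⟩ := f
    obtain ⟨μ, hμ⟩ := hval
    have heq : (⟨val, ⟨μ, hμ⟩⟩ : AV fV) = ⟨KV fV μ, ⟨μ, rfl⟩⟩ := Subtype.ext hμ
    rw [heq, hT' μ, hT1 μ]
  · -- probability measure clause
    intro PX hPX
    have hjord : PX.toSignedMeasure.toJordanDecomposition
        = ⟨PX, 0, Measure.MutuallySingular.zero_right⟩ := by
      have hj : (⟨PX, 0, Measure.MutuallySingular.zero_right⟩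
          : JordanDecomposition (Ed d)).toSignedMeasure
          = PX.toSignedMeasure := by
        rw [JordanDecomposition.toSignedMeasure]
        simp [Measure.toSignedMeasure_zero]
      rw [← hj, JordanDecomposition.toJordanDecomposition_toSignedMeasure]
    have hval : sInt PX.toSignedMeasure lam = ((∫ x, g x * fV (y - x) ∂PX : ℝ) : ℂ) := by
      rw [sInt, hjord]
      simp only [integral_zero_measure, sub_zero]
      rw [hlam_def]
      exact intoR PX (fun x => g x * fV (y - x))
    have hTval : T ⟨KV fV PX.toSignedMeasure, ⟨PX.toSignedMeasure, rfl⟩⟩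
        = ((∫ x, g x * fV (y - x) ∂PX : ℝ) : ℂ) := by
      rw [hT1, hval]
    refine ⟨hTval, fun hpos => ⟨?_, ?_⟩⟩
    · refine Integrable.mono' (integrable_const Mb) ?_ (Filter.Eventually.of_forall fun x => ?_)
      · exact (hg.mul (hfV.1.comp (measurable_const.sub measurable_id))).aestronglyMeasurable
      · have := hMb x
        rw [hlam_def] at this
        simpa [Complex.norm_real, Real.norm_eq_abs] using this
    · rw [hTval]

end
end

section
/- Fix y ∈ ℝ^d and a measurable g : ℝ^d → ℝ. Let f_V be a probability density on ℝ^d with φ_V nonzero Lebesgue-a.e., and suppose λ(x) = g(x) f_V(y − x) is continuous, vanishes at infinity, and is integrable with λ̃ ∈ L¹(ℝ^d;ℂ). Define Q(ω) = λ̃(ω)/φ_V(−ω) when φ_V(−ω) ≠ 0 and Q(ω) = 0 otherwise, and assume Q ∈ L¹(ℝ^d;ℂ). Then the inverse Fourier integral Q^♯(z) = (2π)^{−d} ∫ e^{−i⟨ω,z⟩} Q(ω) dω defines a continuous real-valued function vanishing at infinity, and for every finite signed measure μ, ∫_{ℝ^d} λ(x) dμ(x) = ∫_{ℝ^d} Q^♯(z)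 (f_V * μ)(z) dz. In particular, in the additive-noise model Y = X + V with X ⟂ V, whenever f_Y(y) > 0 the posterior expectation of g(X) given Y = y equals E[Q^♯(Y)] / f_Y(y). -/
open MeasureTheory Filter Topology

noncomputable section

/-- Fourier transform `ψ̃(ω) = ∫ e^{i⟨ω,x⟩} ψ(x) dx`. -/
def ftil {d : ℕ} (f : Ed d → ℂ) (ω : Ed d) : ℂ :=
  ∫ x, Complex.exp (Complex.I * ((inner ℝ ω x : ℝ) : ℂ)) * f x

/-- Inverse Fourier integral `ψ^♯(x) = (2π)^{-d} ∫ e^{-i⟨ω,x⟩} ψ(ω) dω`. -/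
def fsharp {d : ℕ} (f : Ed d → ℂ) (x : Ed d) : ℂ :=
  (((2 * Real.pi) ^ d : ℝ) : ℂ)⁻¹ *
    ∫ ω, Complex.exp (-(Complex.I * ((inner ℝ ω x : ℝ) : ℂ))) * f ω

open scoped FourierTransform RealInnerProductSpace ComplexConjugate

section AuxTweedie

variable {d : ℕ}

lemma ftil_eq (f : Ed d → ℂ) (ω : Ed d) :
    ftil f ω = 𝓕 f ((-(2 * Real.pi)⁻¹) • ω) := by
  rw [Real.fourier_eq']
  unfold ftil
  congr 1 with v
  rw [smul_eq_mul, real_inner_smul_right]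
  have h : -2 * Real.pi * (-(2 * Real.pi)⁻¹ * (inner ℝ v ω : ℝ)) = (inner ℝ v ω : ℝ) := by
    field_simp
  rw [h, real_inner_comm]
  ring

lemma fourier_eq_ftil (f : Ed d → ℂ) (w : Ed d) :
    𝓕 f w = ftil f ((-(2 * Real.pi)) • w) := by
  rw [ftil_eq, smul_smul]
  congr 2
  field_simp
  rw [one_smul]

lemma fsharp_eq (f : Ed d → ℂ) (x : Ed d) :
    fsharp f x = 𝓕 (fun u => f ((2 * Real.pi) • u)) x := by
  rw [Real.fourier_eq']
  unfold fsharp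
  have key : ∀ u : Ed d,
      Complex.exp (((-2 * Real.pi * (inner ℝ u x : ℝ) : ℝ) : ℂ) * Complex.I) • f ((2 * Real.pi) • u)
        = (fun ω => Complex.exp (-(Complex.I * ((inner ℝ ω x : ℝ) : ℂ))) * f ω)
            ((2 * Real.pi) • u) := by
    intro u
    simp only [smul_eq_mul]
    congr 1
    rw [real_inner_smul_left]
    push_cast
    ring_nf
  rw [integral_congr_ae (Filter.Eventually.of_forall key),
    Measure.integral_comp_smul (volume : Measure (Ed d))
      (fun ω => Complex.exp (-(Complex.I * ((inner ℝ ω x : ℝ) : ℂ))) * f ω) (2 * Real.pi)]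
  rw [finrank_euclideanSpace_fin]
  rw [abs_of_nonneg (by positivity), Complex.real_smul]
  push_cast
  ring




lemma two_pi_ne : (2 * Real.pi) ≠ 0 := by positivity

lemma fsharp_ftil (f : Ed d → ℂ) (hc : Continuous f) (hf : Integrable f)
    (hf' : Integrable (ftil f)) (x : Ed d) : fsharp (ftil f) x = f x := by
  have hF : Integrable (𝓕 f) := by
    have h1 : (𝓕 f : Ed d → ℂ) = fun w => ftil f ((-(2 * Real.pi)) • w) :=
      funext (fourier_eq_ftil f)
    rw [h1]
    exact hf'.comp_smul (neg_ne_zero.2 two_pi_ne)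
  rw [fsharp_eq]
  have h2 : (fun u : Ed d => ftil f ((2 * Real.pi) • u)) = fun u => 𝓕 f (-u) := by
    funext u
    rw [ftil_eq, smul_smul]
    congr 1
    rw [neg_mul, inv_mul_cancel₀ two_pi_ne, neg_one_smul]
  rw [h2, ← Real.fourierInv_eq_fourier_comp_neg]
  exact hf.fourierInv_fourier_eq hF hc.continuousAt



lemma fourier_continuous (g : Ed d → ℂ) (hg : Integrable g) : Continuous (𝓕 g) :=
  VectorFourier.fourierIntegral_continuous Real.continuous_fourierChar
    (by exact continuous_inner) hg

lemma fsharp_continuous (f : Ed d → ℂ) (hf : Integrable f) : Continuous (fsharp f) := by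
  have : fsharp f = 𝓕 (fun u => f ((2 * Real.pi) • u)) := funext (fsharp_eq f)
  rw [this]
  exact fourier_continuous _ (hf.comp_smul two_pi_ne)

lemma fsharp_c0 (f : Ed d → ℂ) : Tendsto (fsharp f) (cocompact (Ed d)) (𝓝 0) := by
  have : fsharp f = 𝓕 (fun u => f ((2 * Real.pi) • u)) := funext (fsharp_eq f)
  rw [this]
  exact tendsto_integral_exp_inner_smul_cocompact _

lemma norm_exp_neg_I_mul (t : ℝ) : ‖Complex.exp (-(Complex.I * (t : ℂ)))‖ = 1 := by
  rw [Complex.norm_exp]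
  simp

lemma norm_exp_I_mul (t : ℝ) : ‖Complex.exp (Complex.I * (t : ℂ))‖ = 1 := by
  rw [Complex.norm_exp]
  simp

lemma fsharp_bound (f : Ed d → ℂ) (x : Ed d) :
    ‖fsharp f x‖ ≤ ((2 * Real.pi) ^ d)⁻¹ * ∫ ω, ‖f ω‖ := by
  unfold fsharp
  rw [norm_mul]
  have h1 : ‖(((2 * Real.pi) ^ d : ℝ) : ℂ)⁻¹‖ = ((2 * Real.pi) ^ d)⁻¹ := by
    rw [norm_inv, Complex.norm_real, Real.norm_eq_abs, abs_of_nonneg (by positivity)]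
  rw [h1]
  gcongr
  refine (norm_integral_le_integral_norm _).trans ?_
  refine le_of_eq (integral_congr_ae (Filter.Eventually.of_forall fun ω => ?_))
  show ‖_ * _‖ = _
  rw [norm_mul, norm_exp_neg_I_mul, one_mul]



lemma charFn_neg (fV : Ed d → ℝ) (ω : Ed d) :
    charFn fV (-ω)
      = ∫ v, Complex.exp (-(Complex.I * ((inner ℝ ω v : ℝ) : ℂ))) * ((fV v : ℝ) : ℂ) := by
  unfold charFn
  congr 1 with v
  congr 2
  rw [inner_neg_left]
  push_cast
  ring

lemma conj_ftil_real (f : Ed d → ℂ) (hreal : ∀ x, conj (f x) = f x) (ω : Ed d) :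
    conj (ftil f ω) = ftil f (-ω) := by
  unfold ftil
  rw [← integral_conj]
  congr 1 with x
  rw [map_mul, hreal, ← Complex.exp_conj]
  congr 2
  rw [map_mul, Complex.conj_I, Complex.conj_ofReal, inner_neg_left]
  push_cast
  ring

lemma conj_charFn (fV : Ed d → ℝ) (ω : Ed d) :
    conj (charFn fV ω) = charFn fV (-ω) :=
  conj_ftil_real (fun v => ((fV v : ℝ) : ℂ)) (fun v => Complex.conj_ofReal _) ω



/-- The kernel `e^{-i⟨ω,z⟩}`. -/
def eker {d : ℕ} (ω z : Ed d) : ℂ := Complex.exp (-(Complex.I * ((inner ℝ ω z : ℝ) : ℂ)))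

lemma norm_eker (ω z : Ed d) : ‖eker ω z‖ = 1 := norm_exp_neg_I_mul _

lemma eker_add_right (ω u x : Ed d) : eker ω (u + x) = eker ω u * eker ω x := by
  unfold eker
  rw [← Complex.exp_add]
  congr 1
  rw [inner_add_right]
  push_cast
  ring

lemma eker_continuous : Continuous fun p : Ed d × Ed d => eker p.1 p.2 := by
  unfold eker
  have h1 : Continuous fun p : Ed d × Ed d => (inner ℝ p.1 p.2 : ℝ) := continuous_inner
  exact Complex.continuous_exp.comp
    ((continuous_const.mul (Complex.continuous_ofReal.comp h1)).neg)

lemma charFn_neg' (fV : Ed d → ℝ) (ω : Ed d) :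
    charFn fV (-ω) = ∫ v, eker ω v * ((fV v : ℝ) : ℂ) := charFn_neg fV ω

lemma key_pointwise (fV : Ed d → ℝ) (hfV_int : Integrable fV)
    (lam Q : Ed d → ℂ) (hlam_cont : Continuous lam) (hlam_int : Integrable lam)
    (hlamtil_int : Integrable (ftil lam)) (hQ_int : Integrable Q)
    (hae : ∀ᵐ ω : Ed d ∂volume, Q ω * charFn fV (-ω) = ftil lam ω) (x : Ed d) :
    ∫ z, fsharp Q z * ((fV (z - x) : ℝ) : ℂ) = lam x := by
  set c : ℂ := (((2 * Real.pi) ^ d : ℝ) : ℂ)⁻¹ with hc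
  have hprod : Integrable
      (Function.uncurry fun z ω => eker ω z * Q ω * ((fV (z - x) : ℝ) : ℂ))
      (volume.prod volume) := by
    have h0 : Integrable (fun p : Ed d × Ed d => ((fV (p.1 - x) : ℝ) : ℂ) * Q p.2)
        (volume.prod volume) := (hfV_int.ofReal.comp_sub_right x).mul_prod hQ_int
    have h1 : Integrable (fun p : Ed d × Ed d =>
        eker p.2 p.1 * (((fV (p.1 - x) : ℝ) : ℂ) * Q p.2)) (volume.prod volume) := by
      refine h0.bdd_mul (c := 1) ?_ (Filter.Eventually.of_forall fun p => le_of_eq (norm_eker _ _))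
      exact (eker_continuous.comp (continuous_snd.prodMk continuous_fst)).aestronglyMeasurable
    exact h1.congr (Filter.Eventually.of_forall fun p => by
      simp only [Function.uncurry]; ring)
  have step1 : ∀ z : Ed d, fsharp Q z * ((fV (z - x) : ℝ) : ℂ)
      = c * ∫ ω, eker ω z * Q ω * ((fV (z - x) : ℝ) : ℂ) := by
    intro z
    rw [show fsharp Q z = c * ∫ ω, eker ω z * Q ω from rfl, mul_assoc,
      ← integral_mul_const]
  have step4 : ∀ ω : Ed d, (∫ z, eker ω z * Q ω * ((fV (z - x) : ℝ) : ℂ))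
      = eker ω x * (Q ω * charFn fV (-ω)) := by
    intro ω
    have ht := (integral_add_right_eq_self (μ := volume)
      (fun z => eker ω z * Q ω * ((fV (z - x) : ℝ) : ℂ)) x).symm
    rw [ht]
    have h2 : ∀ u : Ed d, eker ω (u + x) * Q ω * ((fV (u + x - x) : ℝ) : ℂ)
        = (eker ω x * Q ω) * (eker ω u * ((fV u : ℝ) : ℂ)) := by
      intro u
      rw [add_sub_cancel_right, eker_add_right]
      ring
    rw [integral_congr_ae (Filter.Eventually.of_forall h2), integral_const_mul,
      ← charFn_neg']
    ring
  calc ∫ z, fsharp Q z * ((fV (z - x) : ℝ) : ℂ)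
      = ∫ z, c * ∫ ω, eker ω z * Q ω * ((fV (z - x) : ℝ) : ℂ) :=
        integral_congr_ae (Filter.Eventually.of_forall step1)
    _ = c * ∫ z, ∫ ω, eker ω z * Q ω * ((fV (z - x) : ℝ) : ℂ) := integral_const_mul c _
    _ = c * ∫ ω, ∫ z, eker ω z * Q ω * ((fV (z - x) : ℝ) : ℂ) := by
        rw [integral_integral_swap hprod]
    _ = c * ∫ ω, eker ω x * (Q ω * charFn fV (-ω)) := by
        rw [integral_congr_ae (Filter.Eventually.of_forall step4)]
    _ = c * ∫ ω, eker ω x * ftil lam ω := by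
        congr 1
        exact integral_congr_ae (hae.mono fun ω h => by dsimp only; rw [h])
    _ = fsharp (ftil lam) x := rfl
    _ = lam x := fsharp_ftil lam hlam_cont hlam_int hlamtil_int x



lemma key_measure (fV : Ed d → ℝ) (hfV_meas : Measurable fV) (hfV_int : Integrable fV)
    (lam Q : Ed d → ℂ) (hQcont : Continuous (fsharp Q)) (hQ_int : Integrable Q)
    (hkey : ∀ x, ∫ z, fsharp Q z * ((fV (z - x) : ℝ) : ℂ) = lam x)
    (ν : Measure (Ed d)) [IsFiniteMeasure ν] :
    (∫ x, lam x ∂ν) = (∫ z, fsharp Q z * ∫ x, ((fV (z - x) : ℝ) : ℂ) ∂ν) ∧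
      Integrable (fun z => fsharp Q z * ∫ x, ((fV (z - x) : ℝ) : ℂ) ∂ν) := by
  have hint2 : Integrable (fun p : Ed d × Ed d => fsharp Q p.2 * ((fV (p.2 - p.1) : ℝ) : ℂ))
      (ν.prod volume) := by
    have hmeasg : AEStronglyMeasurable (fun p : Ed d × Ed d => ((fV (p.2 - p.1) : ℝ) : ℂ))
        (ν.prod volume) :=
      (Complex.measurable_ofReal.comp
        (hfV_meas.comp (measurable_snd.sub measurable_fst))).aestronglyMeasurable
    have hg : Integrable (fun p : Ed d × Ed d => ((fV (p.2 - p.1) : ℝ) : ℂ)) (ν.prod volume) := by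
      rw [integrable_prod_iff hmeasg]
      refine ⟨Filter.Eventually.of_forall fun x => Integrable.comp_sub_right (f := fun v => ((fV v : ℝ) : ℂ)) hfV_int.ofReal x, ?_⟩
      have hconst : (fun x : Ed d => ∫ z, ‖((fV (z - x) : ℝ) : ℂ)‖)
          = fun _ : Ed d => ∫ z, ‖fV z‖ := by
        funext x
        simp only [Complex.norm_real]
        exact integral_sub_right_eq_self (fun z => ‖fV z‖) x
      rw [hconst]
      exact integrable_const _
    exact hg.bdd_mul ((hQcont.comp continuous_snd).aestronglyMeasurable)
      (c := ((2 * Real.pi) ^ d)⁻¹ * ∫ ω, ‖Q ω‖) (Filter.Eventually.of_forall fun p => fsharp_bound Q p.2)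
  have hswap := integral_integral_swap
    (f := fun x z => fsharp Q z * ((fV (z - x) : ℝ) : ℂ)) hint2
  constructor
  · calc ∫ x, lam x ∂ν
        = ∫ x, ∫ z, fsharp Q z * ((fV (z - x) : ℝ) : ℂ) ∂volume ∂ν :=
          integral_congr_ae (Filter.Eventually.of_forall fun x => (hkey x).symm)
      _ = ∫ z, ∫ x, fsharp Q z * ((fV (z - x) : ℝ) : ℂ) ∂ν ∂volume := hswap
      _ = ∫ z, fsharp Q z * ∫ x, ((fV (z - x) : ℝ) : ℂ) ∂ν :=
          integral_congr_ae (Filter.Eventually.of_forall fun z => integral_const_mul _ _)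
  · exact hint2.integral_prod_right.congr
      (Filter.Eventually.of_forall fun z => by dsimp only; exact integral_const_mul _ _)



lemma conj_eker (ω z : Ed d) : conj (eker ω z) = eker (-ω) z := by
  unfold eker
  rw [← Complex.exp_conj]
  congr 1
  rw [map_neg, map_mul, Complex.conj_I, Complex.conj_ofReal, inner_neg_left]
  push_cast
  ring

lemma fsharp_im_zero (Q : Ed d → ℂ) (hconj : ∀ ω, conj (Q ω) = Q (-ω)) (z : Ed d) :
    (fsharp Q z).im = 0 := by
  have hJ : conj (∫ ω, eker ω z * Q ω) = ∫ ω, eker ω z * Q ω := by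
    rw [← integral_conj]
    calc ∫ ω, conj (eker ω z * Q ω)
        = ∫ ω, (fun ω => eker ω z * Q ω) (-ω) := by
          refine integral_congr_ae (Filter.Eventually.of_forall fun ω => ?_)
          dsimp only
          rw [map_mul, hconj, conj_eker]
      _ = ∫ ω, eker ω z * Q ω := by
          simpa using integral_neg_eq_self (fun ω => eker ω z * Q ω) volume
  have him : (∫ ω, eker ω z * Q ω).im = 0 := by
    have h2 := congrArg Complex.im hJ
    rw [Complex.conj_im] at h2
    linarith
  show ((((2 * Real.pi) ^ d : ℝ) : ℂ)⁻¹ * ∫ ω, eker ω z * Q ω).im = 0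
  simp only [Complex.mul_im, him, mul_zero, zero_add]
  have h3 : ((((2 * Real.pi) ^ d : ℝ) : ℂ))⁻¹.im = 0 := by
    rw [← Complex.ofReal_inv, Complex.ofReal_im]
  rw [h3, zero_mul]

end AuxTweedie

/-- Tweedie representation via expectations: if the
Fourier-domain representer `Q = λ̃/φ_V(−·)` (set to `0` at zeros of `φ_V(−·)`)
is integrable, then `Q^♯` is a continuous real-valued function vanishing at
infinity, `∫ λ dμ = ∫ Q^♯(z) (f_V*μ)(z) dz` for every finite signed measure `μ`,
and in the additive-noise model, whenever `f_Y(y) > 0` the posterior expectation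
of `g(X)` given `Y = y` equals `E[Q^♯(Y)]/f_Y(y) = (∫ Q^♯(z) f_Y(z) dz)/f_Y(y)`. -/
theorem tweedie_stmt13 {d : ℕ} (y : Ed d) (g : Ed d → ℝ) (hg : Measurable g)
    (fV : Ed d → ℝ) (hfV : IsDensity fV)
    (hφ : ∀ᵐ ω : Ed d ∂volume, charFn fV ω ≠ 0)
    (lam : Ed d → ℂ) (hlam_def : lam = fun x => ((g x * fV (y - x) : ℝ) : ℂ))
    (hlam_cont : Continuous lam)
    (hlam_c0 : Tendsto lam (cocompact (Ed d)) (𝓝 0))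
    (hlam_int : Integrable lam)
    (hlamtil_int : Integrable (ftil lam))
    (Q : Ed d → ℂ)
    (hQ_def : ∀ ω : Ed d,
      Q ω = if charFn fV (-ω) ≠ 0 then ftil lam ω / charFn fV (-ω) else 0)
    (hQ_int : Integrable Q) :
    Continuous (fsharp Q) ∧
    (∀ z : Ed d, (fsharp Q z).im = 0) ∧
    Tendsto (fsharp Q) (cocompact (Ed d)) (𝓝 0) ∧
    (∀ μ : SignedMeasure (Ed d),
      sInt μ lam = ∫ z, fsharp Q z * KV fV μ z) ∧
    (∀ (PX : Measure (Ed d)) [IsProbabilityMeasure PX],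
      0 < (∫ x, fV (y - x) ∂PX) →
      (∫ x, g x * fV (y - x) ∂PX) / (∫ x, fV (y - x) ∂PX)
        = (∫ z, (fsharp Q z).re * (∫ x, fV (z - x) ∂PX))
            / (∫ x, fV (y - x) ∂PX)) := by

  obtain ⟨hfV_meas, hfV_nonneg, hfV_int, hfV_one⟩ := hfV
  have hcont : Continuous (fsharp Q) := fsharp_continuous Q hQ_int
  have hφneg : ∀ᵐ ω : Ed d ∂volume, charFn fV (-ω) ≠ 0 :=
    (Measure.measurePreserving_neg (volume : Measure (Ed d))).quasiMeasurePreserving.ae hφ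
  have hae : ∀ᵐ ω : Ed d ∂volume, Q ω * charFn fV (-ω) = ftil lam ω := by
    refine hφneg.mono fun ω h => ?_
    rw [hQ_def ω, if_pos h, div_mul_cancel₀ _ h]
  have hkey : ∀ x, ∫ z, fsharp Q z * ((fV (z - x) : ℝ) : ℂ) = lam x :=
    key_pointwise fV hfV_int lam Q hlam_cont hlam_int hlamtil_int hQ_int hae
  have hlam_real : ∀ x, (starRingEnd ℂ) (lam x) = lam x := by
    intro x; rw [hlam_def]; exact Complex.conj_ofReal _
  have hQ_conj : ∀ ω, (starRingEnd ℂ) (Q ω) = Q (-ω) := by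
    intro ω
    rw [hQ_def ω, hQ_def (-ω), neg_neg]
    by_cases h : charFn fV (-ω) = 0
    · have h2 : charFn fV ω = 0 := by
        have h3 := conj_charFn fV (-ω)
        rw [neg_neg, h, map_zero] at h3
        exact h3.symm
      simp [h, h2]
    · have h2 : charFn fV ω ≠ 0 := by
        have h3 := conj_charFn fV (-ω)
        rw [neg_neg] at h3
        rw [← h3]
        simpa using h
      rw [if_pos h, if_pos h2, map_div₀, conj_ftil_real lam hlam_real,
        conj_charFn, neg_neg]
  have hpart4 : ∀ μ : SignedMeasure (Ed d),
      sInt μ lam = ∫ z, fsharp Q z * KV fV μ z := by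
    intro μ
    have hp := key_measure fV hfV_meas hfV_int lam Q hcont hQ_int hkey
      μ.toJordanDecomposition.posPart
    have hn := key_measure fV hfV_meas hfV_int lam Q hcont hQ_int hkey
      μ.toJordanDecomposition.negPart
    rw [show sInt μ lam = (∫ x, lam x ∂μ.toJordanDecomposition.posPart)
        - ∫ x, lam x ∂μ.toJordanDecomposition.negPart from rfl, hp.1, hn.1,
      ← integral_sub hp.2 hn.2]
    refine integral_congr_ae (Filter.Eventually.of_forall fun z => ?_)
    dsimp only
    rw [show KV fV μ z = (∫ x, ((fV (z - x) : ℝ) : ℂ) ∂μ.toJordanDecomposition.posPart)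
        - ∫ x, ((fV (z - x) : ℝ) : ℂ) ∂μ.toJordanDecomposition.negPart from rfl, mul_sub]
  refine ⟨hcont, fun z => fsharp_im_zero Q hQ_conj z, fsharp_c0 Q, hpart4, ?_⟩
  intro PX hPX hden
  let j : MeasureTheory.JordanDecomposition (Ed d) :=
    ⟨PX, 0, Measure.MutuallySingular.zero_right⟩
  let μ : SignedMeasure (Ed d) := j.toSignedMeasure
  have hj : μ.toJordanDecomposition = j := j.toJordanDecomposition_toSignedMeasure
  have hjp : μ.toJordanDecomposition.posPart = PX := by rw [hj]
  have hjn : μ.toJordanDecomposition.negPart = 0 := by rw [hj]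
  have hm := key_measure fV hfV_meas hfV_int lam Q hcont hQ_int hkey PX
  have h1 : sInt μ lam = ((∫ x, g x * fV (y - x) ∂PX : ℝ) : ℂ) := by
    rw [show sInt μ lam = (∫ x, lam x ∂μ.toJordanDecomposition.posPart)
        - ∫ x, lam x ∂μ.toJordanDecomposition.negPart from rfl, hjp, hjn,
      integral_zero_measure, sub_zero, hlam_def]
    exact integral_ofReal
  have hKV : ∀ z, KV fV μ z = ((∫ x, fV (z - x) ∂PX : ℝ) : ℂ) := by
    intro z
    rw [show KV fV μ z = (∫ x, ((fV (z - x) : ℝ) : ℂ) ∂μ.toJordanDecomposition.posPart)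
        - ∫ x, ((fV (z - x) : ℝ) : ℂ) ∂μ.toJordanDecomposition.negPart from rfl, hjp, hjn,
      integral_zero_measure, sub_zero]
    exact integral_ofReal
  have hc : ((∫ x, g x * fV (y - x) ∂PX : ℝ) : ℂ) = ∫ z, fsharp Q z * KV fV μ z := by
    rw [← h1]
    exact hpart4 μ
  have hint : Integrable (fun z => fsharp Q z * KV fV μ z) := by
    refine hm.2.congr (Filter.Eventually.of_forall fun z => ?_)
    dsimp only
    rw [hKV z]
    congr 1
    exact integral_ofReal
  have hnum : (∫ x, g x * fV (y - x) ∂PX)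
      = ∫ z, (fsharp Q z).re * (∫ x, fV (z - x) ∂PX) := by
    have h5 := congrArg Complex.re hc
    rw [Complex.ofReal_re] at h5
    have h6 := integral_re hint
    simp only [RCLike.re_to_complex] at h6
    rw [h5, ← h6]
    refine integral_congr_ae (Filter.Eventually.of_forall fun z => ?_)
    dsimp only
    rw [hKV z]
    simp [Complex.mul_re]
  rw [hnum]

end
end

section
/- Let Y = X + V with X independent of V on ℝ^d, where the density f_V of V belongs to C_0^k(ℝ^d;ℝ) and φ_V is nonzero Lebesgue-a.e. Let g : ℝ^d → ℝ be measurable with ∫ |g(x)| dP_X(x) < ∞. Define N_g(y) := ∫_{ℝ^d} g(x) f_V(y − x) dP_X(x) and f_Y(y) := ∫ f_V(y − x) dP_X(x). Then N_g ∈ Ξ^k(ℝ^d;ℂ), f_Y(Y) > 0 almost surely, and the conditional expectation satisfies E[g(X) | Y] = N_g(Y) / f_Y(Y) almost surely. -/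
open MeasureTheory Filter Topology
open scoped ENNReal NNReal

set_option synthInstance.maxHeartbeats 1000000
set_option maxHeartbeats 4000000
set_option linter.unusedSectionVars false
set_option linter.unusedVariables false

noncomputable section

section ConvAux

variable {d : ℕ}

lemma exists_bound_of_cocompact {X : Type*} [TopologicalSpace X] {f : X → ℝ}
    (hc : Continuous f) (h : Tendsto f (cocompact X) (𝓝 0)) : ∃ C, ∀ y, f y ≤ C := by
  have h1 : ∀ᶠ y in cocompact X, f y < 1 := h.eventually_lt_const one_pos
  obtain ⟨K, hK, hKs⟩ := Filter.mem_cocompact.mp h1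
  obtain ⟨C, hC⟩ := hK.exists_bound_of_continuousOn hc.continuousOn
  refine ⟨max C 1, fun y => ?_⟩
  by_cases hy : y ∈ K
  · exact le_trans (le_trans (le_abs_self _) (hC y hy)) (le_max_left _ _)
  · exact le_trans (le_of_lt (hKs hy)) (le_max_right _ _)

lemma tendsto_sub_cocompact (x : Ed d) :
    Tendsto (fun z : Ed d => z - x) (cocompact (Ed d)) (cocompact (Ed d)) := by
  apply tendsto_cocompact_of_tendsto_dist_comp_atTop (0 : Ed d)
  have h0 : Tendsto (fun z : Ed d => dist z (0 : Ed d) + -‖x‖) (cocompact (Ed d)) atTop :=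
    tendsto_atTop_add_const_right _ _ (tendsto_dist_right_cocompact_atTop 0)
  refine tendsto_atTop_mono (fun z => ?_) h0
  simp only [dist_eq_norm, sub_zero]
  linarith [norm_sub_norm_le z x]

instance cocompactCG : (cocompact (Ed d)).IsCountablyGenerated := by
  rw [← comap_dist_left_atTop_eq_cocompact (0 : Ed d)]
  infer_instance

variable {E : Type*} [NormedAddCommGroup E] [NormedSpace ℝ E] [CompleteSpace E]

lemma conv_integrand_integrable (μ : Measure (Ed d)) {w : Ed d → ℝ} (hw : Integrable w μ)
    {Φ : Ed d → E} (hΦc : Continuous Φ) {C0 : ℝ} (hb0 : ∀ y, ‖Φ y‖ ≤ C0) (z : Ed d) :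
    Integrable (fun x => w x • Φ (z - x)) μ := by
  refine Integrable.mono' (hw.norm.mul_const C0)
    (hw.aestronglyMeasurable.smul
      ((hΦc.comp (continuous_const.sub continuous_id)).aestronglyMeasurable))
    (ae_of_all _ fun x => ?_)
  rw [norm_smul]
  exact mul_le_mul_of_nonneg_left (hb0 _) (norm_nonneg _)

lemma conv_hasFDerivAt (μ : Measure (Ed d)) {w : Ed d → ℝ} (hw : Integrable w μ)
    {Φ : Ed d → E} (hΦ : ContDiff ℝ 1 Φ) {C0 C1 : ℝ}
    (hb0 : ∀ y, ‖Φ y‖ ≤ C0) (hb1 : ∀ y, ‖fderiv ℝ Φ y‖ ≤ C1) (z₀ : Ed d) :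
    HasFDerivAt (fun z => ∫ x, w x • Φ (z - x) ∂μ)
      (∫ x, w x • fderiv ℝ Φ (z₀ - x) ∂μ) z₀ := by
  have hΦc : Continuous Φ := hΦ.continuous
  have hΦ' : Continuous (fderiv ℝ Φ) := hΦ.continuous_fderiv one_ne_zero
  apply hasFDerivAt_integral_of_dominated_of_fderiv_le
    (F' := fun z x => w x • fderiv ℝ Φ (z - x)) (bound := fun x => ‖w x‖ * C1) (Metric.ball_mem_nhds z₀ one_pos)
  · exact .of_forall fun z => (hw.aestronglyMeasurable.smul
      ((hΦc.comp (continuous_const.sub continuous_id)).aestronglyMeasurable))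
  · exact conv_integrand_integrable μ hw hΦc hb0 z₀
  · exact hw.aestronglyMeasurable.smul
      ((hΦ'.comp (continuous_const.sub continuous_id)).aestronglyMeasurable)
  · refine ae_of_all _ fun x z _ => ?_
    exact (norm_smul_le _ _).trans (mul_le_mul_of_nonneg_left (hb1 _) (norm_nonneg _))
  · exact hw.norm.mul_const C1
  · refine ae_of_all _ fun x z _ => ?_
    have h1 : HasFDerivAt (fun z : Ed d => z - x) (ContinuousLinearMap.id ℝ (Ed d)) z :=
      (hasFDerivAt_id z).sub_const x
    have h2 := ((hΦ.differentiable one_ne_zero) (z - x)).hasFDerivAt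
    have h3 := h2.comp z h1
    have h4 := h3.const_smul (w x)
    simpa [Function.comp_def, Pi.smul_def] using h4

end ConvAux

section ConvAux2
universe u

theorem conv_aux {d : ℕ} (w : Ed d → ℝ) (n : ℕ) :
    ∀ {E : Type u} [NormedAddCommGroup E] [NormedSpace ℝ E] [CompleteSpace E]
      (μ : Measure (Ed d)) [IsFiniteMeasure μ] (_ : Integrable w μ) (f : Ed d → E)
      (_ : ContDiff ℝ n f) (_ : ∀ m : ℕ, m ≤ n → ∃ C, ∀ y, ‖iteratedFDeriv ℝ m f y‖ ≤ C),
      ContDiff ℝ n (fun z => ∫ x, w x • f (z - x) ∂μ) ∧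
        ∀ z, iteratedFDeriv ℝ n (fun z => ∫ x, w x • f (z - x) ∂μ) z =
          ∫ x, w x • iteratedFDeriv ℝ n f (z - x) ∂μ := by
  induction n with
  | zero =>
    intro E _ _ _ μ _ hw f hf hb
    obtain ⟨C0, hC0⟩ := hb 0 le_rfl
    simp only [norm_iteratedFDeriv_zero] at hC0
    have hfc : Continuous f := hf.continuous
    have hFc : Continuous (fun z => ∫ x, w x • f (z - x) ∂μ) := by
      rw [continuous_iff_continuousAt]
      intro z
      refine tendsto_integral_filter_of_dominated_convergence (fun x => ‖w x‖ * C0)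
        (.of_forall fun z' => hw.aestronglyMeasurable.smul
          ((hfc.comp (continuous_const.sub continuous_id)).aestronglyMeasurable))
        (.of_forall fun z' => ae_of_all _ fun x =>
          (norm_smul_le _ _).trans (mul_le_mul_of_nonneg_left (hC0 _) (norm_nonneg _)))
        (hw.norm.mul_const C0)
        (ae_of_all _ fun x =>
          ((continuous_const.smul (hfc.comp (continuous_id.sub continuous_const))).tendsto z))
    refine ⟨contDiff_zero.mpr hFc, fun z => ?_⟩
    set L := (continuousMultilinearCurryFin0 ℝ (Ed d) E).symm.toContinuousLinearEquiv with hL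
    calc iteratedFDeriv ℝ 0 (fun z => ∫ x, w x • f (z - x) ∂μ) z
        = L (∫ x, w x • f (z - x) ∂μ) := by
          rw [iteratedFDeriv_zero_eq_comp]
          try simp [hL]
      _ = ∫ x, L (w x • f (z - x)) ∂μ := (L.integral_comp_comm _).symm
      _ = ∫ x, w x • iteratedFDeriv ℝ 0 f (z - x) ∂μ := by
          have h : ∀ x : Ed d, L (w x • f (z - x)) = w x • iteratedFDeriv ℝ 0 f (z - x) := by
            intro x
            rw [iteratedFDeriv_zero_eq_comp]
            exact _root_.map_smul L (w x) (f (z - x))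
          simp only [h]
  | succ n IH =>
    intro E _ _ _ μ _ hw f hf hb
    obtain ⟨C0, hC0⟩ := hb 0 (Nat.zero_le _)
    simp only [norm_iteratedFDeriv_zero] at hC0
    obtain ⟨C1, hC1⟩ := hb 1 (by omega)
    have hC1' : ∀ y, ‖fderiv ℝ f y‖ ≤ C1 := fun y => by
      have h1 : ‖iteratedFDeriv ℝ 0 (fderiv ℝ f) y‖ = ‖iteratedFDeriv ℝ 1 f y‖ :=
        norm_iteratedFDeriv_fderiv
      rw [norm_iteratedFDeriv_zero] at h1
      rw [h1]; exact hC1 y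
    have hf1 : ContDiff ℝ 1 f := hf.of_le (by exact_mod_cast Nat.succ_le_succ (Nat.zero_le n))
    have hderiv : ∀ z, HasFDerivAt (fun z => ∫ x, w x • f (z - x) ∂μ)
        (∫ x, w x • fderiv ℝ f (z - x) ∂μ) z := fun z =>
      conv_hasFDerivAt μ hw hf1 hC0 hC1' z
    have hΦ : ContDiff ℝ n (fderiv ℝ f) := hf.fderiv_right (by push_cast; rfl)
    have hΦb : ∀ m : ℕ, m ≤ n → ∃ C, ∀ y, ‖iteratedFDeriv ℝ m (fderiv ℝ f) y‖ ≤ C :=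
      fun m hm => (hb (m + 1) (by omega)).imp fun C hC y => by
        rw [norm_iteratedFDeriv_fderiv]; exact hC y
    obtain ⟨hG, hGf⟩ := IH μ hw (fderiv ℝ f) hΦ hΦb
    have hFG : fderiv ℝ (fun z => ∫ x, w x • f (z - x) ∂μ)
        = fun z => ∫ x, w x • fderiv ℝ f (z - x) ∂μ := funext fun z => (hderiv z).fderiv
    constructor
    · rw [show ((n + 1 : ℕ) : WithTop ℕ∞) = (n : WithTop ℕ∞) + 1 by push_cast; rfl,
        contDiff_succ_iff_fderiv]
      refine ⟨fun z => (hderiv z).differentiableAt, by simp, ?_⟩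
      rw [hFG]; exact hG
    · intro z
      have hΦcont : Continuous (iteratedFDeriv ℝ n (fderiv ℝ f)) :=
        hΦ.continuous_iteratedFDeriv le_rfl
      obtain ⟨Cn, hCn⟩ := hΦb n le_rfl
      set L := ((continuousMultilinearCurryRightEquiv' ℝ n (Ed d) E).symm).toContinuousLinearEquiv
        with hLdef
      calc iteratedFDeriv ℝ (n + 1) (fun z => ∫ x, w x • f (z - x) ∂μ) z
          = L (iteratedFDeriv ℝ n (fderiv ℝ (fun z => ∫ x, w x • f (z - x) ∂μ)) z) := by
            rw [iteratedFDeriv_succ_eq_comp_right]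
            try simp [hLdef]
            rfl
        _ = L (∫ x, w x • iteratedFDeriv ℝ n (fderiv ℝ f) (z - x) ∂μ) := by
            rw [hFG, hGf z]
        _ = ∫ x, L (w x • iteratedFDeriv ℝ n (fderiv ℝ f) (z - x)) ∂μ :=
            (L.integral_comp_comm (fun x => w x • iteratedFDeriv ℝ n (fderiv ℝ f) (z - x))).symm
        _ = ∫ x, w x • iteratedFDeriv ℝ (n + 1) f (z - x) ∂μ := by
            have h : ∀ x : Ed d, L (w x • iteratedFDeriv ℝ n (fderiv ℝ f) (z - x))
                = w x • iteratedFDeriv ℝ (n + 1) f (z - x) := by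
              intro x
              rw [_root_.map_smul]
              congr 1
              rw [iteratedFDeriv_succ_eq_comp_right]
              rfl
            simp only [h]

end ConvAux2


section Model

variable {d : ℕ}

theorem conv_smooth (μ : Measure (Ed d)) [IsFiniteMeasure μ] {w : Ed d → ℝ}
    (hw : Integrable w μ) {f : Ed d → ℝ} {k : ℕ} (hf : ContDiff ℝ (k : ℕ∞) f)
    (hb : ∀ m : ℕ, m ≤ k → ∃ C, ∀ y, ‖iteratedFDeriv ℝ m f y‖ ≤ C) :
    ContDiff ℝ (k : ℕ∞) (fun z => ∫ x, w x * f (z - x) ∂μ) ∧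
      ∀ m : ℕ, m ≤ k → ∀ z, iteratedFDeriv ℝ m (fun z => ∫ x, w x * f (z - x) ∂μ) z =
        ∫ x, w x • iteratedFDeriv ℝ m f (z - x) ∂μ := by
  have hcast : ((k : ℕ∞) : WithTop ℕ∞) = ((k : ℕ) : WithTop ℕ∞) := by exact_mod_cast rfl
  have hf' : ContDiff ℝ ((k : ℕ) : WithTop ℕ∞) f := by rw [← hcast]; exact hf
  have hmul : (fun z => ∫ x, w x * f (z - x) ∂μ) = fun z => ∫ x, w x • f (z - x) ∂μ := by
    simp only [smul_eq_mul]
  constructor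
  · rw [hmul, hcast]
    exact (conv_aux w k μ hw f hf' hb).1
  · intro m hm z
    rw [hmul]
    exact (conv_aux w m μ hw f (hf'.of_le (by exact_mod_cast hm))
      (fun i hi => hb i (le_trans hi hm))).2 z

theorem conv_decay (μ : Measure (Ed d)) [IsFiniteMeasure μ] {w : Ed d → ℝ}
    (hw : Integrable w μ) {h : Ed d → ℝ} (hc : Continuous h) {C : ℝ}
    (hbd : ∀ y, |h y| ≤ C) (hdec : Tendsto h (cocompact (Ed d)) (𝓝 0)) :
    Tendsto (fun z => ∫ x, ‖w x‖ * h (z - x) ∂μ) (cocompact (Ed d)) (𝓝 0) := by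
  have hlim := tendsto_integral_filter_of_dominated_convergence
    (μ := μ) (F := fun (z : Ed d) x => ‖w x‖ * h (z - x)) (f := fun _ => (0 : ℝ))
    (l := cocompact (Ed d)) (bound := fun x => ‖w x‖ * C)
    (.of_forall fun z => (hw.norm.aestronglyMeasurable.mul
      ((hc.comp (continuous_const.sub continuous_id)).aestronglyMeasurable)))
    (.of_forall fun z => ae_of_all _ fun x => by
      simp only [Real.norm_eq_abs, abs_mul, abs_norm, abs_abs]
      exact mul_le_mul_of_nonneg_left (hbd _) (abs_nonneg _))
    (hw.norm.mul_const C)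
    (ae_of_all _ fun x => by
      have := (hdec.comp (tendsto_sub_cocompact x)).const_mul (‖w x‖)
      simpa using this)
  simpa using hlim

end Model


section MeasureAux

open scoped ENNReal

variable {d : ℕ}

lemma lint_translate (h : Ed d → ℝ≥0∞) (x : Ed d) (B : Set (Ed d)) :
    ∫⁻ v in (fun v => x + v) ⁻¹' B, h v ∂(volume : Measure (Ed d))
      = ∫⁻ y in B, h (y - x) ∂(volume : Measure (Ed d)) := by
  have hmp : MeasurePreserving (fun v : Ed d => x + v) volume volume :=
    measurePreserving_add_left volume x
  have hemb : MeasurableEmbedding (fun v : Ed d => x + v) :=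
    (Homeomorph.addLeft x).measurableEmbedding
  have := hmp.setLIntegral_comp_preimage_emb hemb (fun y => h (y - x)) B
  simpa [add_sub_cancel_left] using this

lemma key_lint (ν : Measure (Ed d)) [IsProbabilityMeasure ν] {fV : Ed d → ℝ}
    (hfVm : Measurable fV) (g₀ : Ed d → ℝ≥0∞) (hg₀ : Measurable g₀)
    {B : Set (Ed d)} (hB : MeasurableSet B) :
    ∫⁻ p, g₀ p.1 * B.indicator 1 (p.1 + p.2)
        ∂(ν.prod (volume.withDensity fun v => ENNReal.ofReal (fV v)))
      = ∫⁻ y in B, ∫⁻ x, g₀ x * ENNReal.ofReal (fV (y - x)) ∂ν ∂volume := by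
  have hmeas : Measurable fun p : Ed d × Ed d => g₀ p.1 * B.indicator 1 (p.1 + p.2) :=
    (hg₀.comp measurable_fst).mul ((measurable_const.indicator hB).comp measurable_add)
  rw [lintegral_prod _ hmeas.aemeasurable]
  have hinner : ∀ x : Ed d, ∫⁻ v, g₀ x * B.indicator 1 (x + v)
      ∂(volume.withDensity fun v => ENNReal.ofReal (fV v))
      = ∫⁻ y in B, g₀ x * ENNReal.ofReal (fV (y - x)) ∂volume := by
    intro x
    have hmb : Measurable fun v : Ed d => B.indicator (1 : Ed d → ℝ≥0∞) (x + v) :=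
      (measurable_const.indicator hB).comp (measurable_const_add x)
    rw [lintegral_const_mul _ hmb]
    have hind : ∀ v : Ed d, B.indicator (1 : Ed d → ℝ≥0∞) (x + v)
        = ((fun v => x + v) ⁻¹' B).indicator (fun _ => 1) v := by
      intro v
      by_cases hv : x + v ∈ B <;> simp [Set.indicator_apply, hv, Set.mem_preimage]
    simp_rw [hind]
    rw [lintegral_indicator ((measurable_const_add x) hB), setLIntegral_one]
    rw [withDensity_apply _ ((measurable_const_add x) hB)]
    rw [lint_translate (fun v => ENNReal.ofReal (fV v)) x B]
    have hmo : Measurable fun y : Ed d => ENNReal.ofReal (fV (y - x)) :=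
      ENNReal.measurable_ofReal.comp (hfVm.comp (measurable_id.sub measurable_const))
    rw [← lintegral_const_mul _ hmo]
  simp_rw [hinner]
  exact lintegral_lintegral_swap (((hg₀.comp measurable_fst).mul
    (ENNReal.measurable_ofReal.comp (hfVm.comp
      (measurable_snd.sub measurable_fst)))).aemeasurable)

end MeasureAux

/-- Membership in `Ξ^k(ℝ^d;ℂ) = C_0^k(ℝ^d;ℂ) ∩ L¹(ℝ^d;ℂ)`: `k`-times continuously
differentiable, all derivatives of order `≤ k` vanish at infinity, and integrable. -/
def XiMem {d : ℕ} (k : ℕ) (ψ : Ed d → ℂ) : Prop :=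
  ContDiff ℝ (k : ℕ∞) ψ ∧
    (∀ n : ℕ, n ≤ k →
      Tendsto (fun x => ‖iteratedFDeriv ℝ n ψ x‖) (cocompact (Ed d)) (𝓝 0)) ∧
    Integrable ψ

/-- The `Ξ^k`-norm `‖ψ‖_{Ξ^k} = max_{|α|≤k} ‖∂^α ψ‖_∞ + ‖ψ‖₁`. -/
def XiNorm {d : ℕ} (k : ℕ) (ψ : Ed d → ℂ) : ℝ :=
  (⨆ n : Fin (k + 1), ⨆ x : Ed d, ‖iteratedFDeriv ℝ (n : ℕ) ψ x‖) + ∫ x, ‖ψ x‖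

open ProbabilityTheory

/-- **Statement 14.** In the additive-noise model `Y = X + V` with `X ⟂ V`,
noise density `f_V ∈ C_0^k(ℝ^d;ℝ)` with a.e. nonvanishing characteristic
function, and `g` measurable with `g(X)` integrable, the numerator
`N_g(y) = ∫ g(x) f_V(y − x) dP_X(x)` belongs to `Ξ^k(ℝ^d;ℂ)`, `f_Y(Y) > 0`
almost surely, and `E[g(X) | Y] = N_g(Y)/f_Y(Y)` almost surely. -/
theorem tweedie_stmt14 {d k : ℕ} {Ω : Type*} [MeasurableSpace Ω]
    (P : Measure Ω) [IsProbabilityMeasure P]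
    (Y X V : Ω → Ed d)
    (hY : Measurable Y) (hX : Measurable X) (hV : Measurable V)
    (hadd : Y = X + V) (hindep : IndepFun X V P)
    (fV : Ed d → ℝ) (hfV : IsDensity fV)
    (hlaw : Measure.map V P = volume.withDensity fun v => ENNReal.ofReal (fV v))
    (hsm : ContDiff ℝ (k : ℕ∞) fV)
    (hdecay : ∀ n : ℕ, n ≤ k →
      Tendsto (fun x => ‖iteratedFDeriv ℝ n fV x‖) (cocompact (Ed d)) (𝓝 0))
    (hφ : ∀ᵐ ω : Ed d ∂volume, charFn fV ω ≠ 0)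
    (g : Ed d → ℝ) (hg : Measurable g)
    (hgint : Integrable g (Measure.map X P))
    (Ng fY : Ed d → ℝ)
    (hNg : Ng = fun z => ∫ x, g x * fV (z - x) ∂(Measure.map X P))
    (hfY : fY = fun z => ∫ x, fV (z - x) ∂(Measure.map X P)) :
    XiMem k (fun z => (Ng z : ℂ)) ∧
    (∀ᵐ ω ∂P, 0 < fY (Y ω)) ∧
    P[(fun ω => g (X ω))|MeasurableSpace.comap Y inferInstance]
      =ᵐ[P] fun ω => Ng (Y ω) / fY (Y ω) := by
  classical
  have hfVm : Measurable fV := hfV.1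
  have hfVnn : ∀ v, 0 ≤ fV v := hfV.2.1
  haveI : IsProbabilityMeasure (Measure.map X P) := Measure.isProbabilityMeasure_map hX.aemeasurable
  haveI : IsProbabilityMeasure (Measure.map V P) := Measure.isProbabilityMeasure_map hV.aemeasurable
  -- bounds on derivatives of fV
  have hbm : ∀ m : ℕ, m ≤ k → ∃ C, ∀ y, ‖iteratedFDeriv ℝ m fV y‖ ≤ C := by
    intro m hm
    obtain ⟨C, hC⟩ := exists_bound_of_cocompact
      ((hsm.continuous_iteratedFDeriv (by exact_mod_cast hm)).norm) (hdecay m hm)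
    exact ⟨C, hC⟩
  obtain ⟨CV, hCV⟩ := hbm 0 (Nat.zero_le _)
  have hCV' : ∀ y, ‖fV y‖ ≤ CV := by
    intro y; have := hCV y; rwa [norm_iteratedFDeriv_zero] at this
  have hfVtransInt : ∀ y : Ed d, Integrable (fun x => fV (y - x)) (Measure.map X P) := by
    intro y
    refine Integrable.mono' (integrable_const CV)
      ((hfVm.comp (measurable_const.sub measurable_id)).aestronglyMeasurable)
      (ae_of_all _ fun x => hCV' _)
  -- smoothness of Ng and fY
  obtain ⟨hNgCD, hNgD⟩ := by
    have h := conv_smooth (Measure.map X P) hgint (k := k) hsm hbm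
    rwa [← hNg] at h
  have hfYone : fY = fun z => ∫ x, (fun _ : Ed d => (1 : ℝ)) x * fV (z - x)
      ∂(Measure.map X P) := by rw [hfY]; simp
  obtain ⟨hfYCD, hfYD⟩ := by
    have h := conv_smooth (Measure.map X P) (integrable_const (1 : ℝ)) (k := k) hsm hbm
    rwa [← hfYone] at h
  have hfYc : Continuous fY := hfYCD.continuous
  have hNgc : Continuous Ng := hNgCD.continuous
  have hfYnn : ∀ y, 0 ≤ fY y := by
    intro y; rw [hfY]; exact integral_nonneg fun x => hfVnn _
  -- Ng vanishes where fY vanishes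
  have hNg0 : ∀ y, fY y = 0 → Ng y = 0 := by
    intro y hy
    have h0 : (fun x => fV (y - x)) =ᵐ[Measure.map X P] 0 := by
      rw [hfY] at hy
      exact (integral_eq_zero_iff_of_nonneg (fun x => hfVnn _) (hfVtransInt y)).mp hy
    rw [hNg]
    rw [show (0 : ℝ) = ∫ x, (0 : ℝ) ∂(Measure.map X P) by simp]
    refine integral_congr_ae ?_
    filter_upwards [h0] with x hx
    simp only [Pi.zero_apply] at hx
    simp [hx]
  -- integrability of Ng over volume
  have hNgInt : Integrable Ng volume := by
    refine ⟨hNgc.aestronglyMeasurable, ?_⟩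
    show (∫⁻ z, (‖Ng z‖₊ : ℝ≥0∞) ∂volume) < ⊤
    have step1 : ∀ z : Ed d, (‖Ng z‖₊ : ℝ≥0∞)
        ≤ ∫⁻ x, (‖g x‖₊ : ℝ≥0∞) * ENNReal.ofReal (fV (z - x)) ∂(Measure.map X P) := by
      intro z
      rw [hNg]
      refine le_trans (enorm_integral_le_lintegral_enorm _) (lintegral_mono fun x => ?_)
      rw [← Real.enorm_eq_ofReal (hfVnn (z - x))]
      simp only [enorm_mul]
      exact le_rfl
    calc (∫⁻ z, (‖Ng z‖₊ : ℝ≥0∞) ∂volume)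
        ≤ ∫⁻ z, ∫⁻ x, (‖g x‖₊ : ℝ≥0∞) * ENNReal.ofReal (fV (z - x)) ∂(Measure.map X P)
            ∂volume := lintegral_mono step1
      _ = ∫⁻ x, ∫⁻ z, (‖g x‖₊ : ℝ≥0∞) * ENNReal.ofReal (fV (z - x)) ∂volume
            ∂(Measure.map X P) := by
          refine lintegral_lintegral_swap ?_
          exact ((measurable_nnnorm.comp (hg.comp measurable_snd)).coe_nnreal_ennreal.mul
            (ENNReal.measurable_ofReal.comp (hfVm.comp
              (measurable_fst.sub measurable_snd)))).aemeasurable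
      _ = ∫⁻ x, (‖g x‖₊ : ℝ≥0∞) ∂(Measure.map X P) := by
          refine lintegral_congr fun x => ?_
          have hmo : Measurable fun z : Ed d => ENNReal.ofReal (fV (z - x)) :=
            ENNReal.measurable_ofReal.comp (hfVm.comp (measurable_id.sub measurable_const))
          rw [lintegral_const_mul _ hmo]
          have hone : ∫⁻ z, ENNReal.ofReal (fV (z - x)) ∂(volume : Measure (Ed d)) = 1 := by
            have htr : ∫⁻ z, ENNReal.ofReal (fV (z - x)) ∂(volume : Measure (Ed d))
                = ∫⁻ z, ENNReal.ofReal (fV z) ∂(volume : Measure (Ed d)) := by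
              simp_rw [sub_eq_add_neg]
              exact lintegral_add_right_eq_self (fun z => ENNReal.ofReal (fV z)) (-x)
            rw [htr, ← ofReal_integral_eq_lintegral_ofReal hfV.2.2.1 (ae_of_all _ hfVnn),
              hfV.2.2.2, ENNReal.ofReal_one]
          rw [hone, mul_one]
      _ < ⊤ := hgint.2
  -- key lintegral identity
  have hjoint : Measure.map (fun ω => (X ω, V ω)) P
      = (Measure.map X P).prod (Measure.map V P) :=
    (indepFun_iff_map_prod_eq_prod_map_map hX.aemeasurable hV.aemeasurable).mp hindep
  have keyΩ : ∀ g₀ : Ed d → ℝ≥0∞, Measurable g₀ → ∀ B : Set (Ed d), MeasurableSet B →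
      ∫⁻ ω in Y ⁻¹' B, g₀ (X ω) ∂P
        = ∫⁻ y in B, ∫⁻ x, g₀ x * ENNReal.ofReal (fV (y - x)) ∂(Measure.map X P) ∂volume := by
    intro g₀ hg₀ B hB
    have hmeas : Measurable fun p : Ed d × Ed d => g₀ p.1 * B.indicator 1 (p.1 + p.2) :=
      (hg₀.comp measurable_fst).mul ((measurable_const.indicator hB).comp measurable_add)
    have h1 : ∫⁻ ω in Y ⁻¹' B, g₀ (X ω) ∂P
        = ∫⁻ ω, g₀ (X ω) * B.indicator 1 (Y ω) ∂P := by
      rw [← lintegral_indicator (hY hB)]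
      refine lintegral_congr fun ω => ?_
      by_cases hω : Y ω ∈ B <;> simp [Set.indicator_apply, hω]
    have h2 : ∀ ω, g₀ (X ω) * B.indicator 1 (Y ω)
        = (fun p : Ed d × Ed d => g₀ p.1 * B.indicator 1 (p.1 + p.2)) (X ω, V ω) := by
      intro ω
      have : Y ω = X ω + V ω := by rw [hadd]; rfl
      rw [this]
    rw [h1]
    simp_rw [h2]
    rw [← lintegral_map hmeas (hX.prodMk hV), hjoint, hlaw]
    exact key_lint (Measure.map X P) hfVm g₀ hg₀ hB
  -- law of Y
  have hYlaw : Measure.map Y P = volume.withDensity fun y => ENNReal.ofReal (fY y) := by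
    ext B hB
    rw [Measure.map_apply hY hB, withDensity_apply _ hB]
    have h1 : P (Y ⁻¹' B) = ∫⁻ ω in Y ⁻¹' B, (fun _ => (1 : ℝ≥0∞)) (X ω) ∂P := by
      simp [setLIntegral_one]
    rw [h1, keyΩ _ measurable_const B hB]
    refine lintegral_congr fun y => ?_
    simp_rw [one_mul]
    exact (ofReal_integral_eq_lintegral_ofReal (hfVtransInt y) (ae_of_all _ fun x => hfVnn _)).symm
      |>.trans (by rw [hfY])
  -- Part 1: XiMem
  have part1 : XiMem k (fun z => (Ng z : ℂ)) := by
    refine ⟨?_, ?_, ?_⟩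
    · exact Complex.ofRealCLM.contDiff.comp hNgCD
    · intro n hn
      have heq : ∀ z : Ed d, ‖iteratedFDeriv ℝ n (fun z => (Ng z : ℂ)) z‖
          = ‖iteratedFDeriv ℝ n Ng z‖ := fun z =>
        Complex.ofRealLI.norm_iteratedFDeriv_comp_left hNgCD.contDiffAt (by exact_mod_cast hn)
      obtain ⟨C, hC⟩ := hbm n hn
      have hd := conv_decay (Measure.map X P) hgint
        ((hsm.continuous_iteratedFDeriv (by exact_mod_cast hn)).norm)
        (C := C) (fun y => by rw [abs_norm]; exact hC y) (hdecay n hn)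
      refine squeeze_zero (fun z => norm_nonneg _) (fun z => ?_) hd
      rw [heq z, hNgD n hn z]
      refine le_trans (norm_integral_le_integral_norm _) (le_of_eq ?_)
      refine integral_congr_ae (ae_of_all _ fun x => ?_)
      exact norm_smul (g x) _
    · exact hNgInt.ofReal
  -- Part 2: positivity
  have part2 : ∀ᵐ ω ∂P, 0 < fY (Y ω) := by
    have hSeq : {y : Ed d | ¬ 0 < fY y} = {y | fY y ≤ 0} := by ext y; simp [not_lt]
    have hSmeas : MeasurableSet {y : Ed d | ¬ 0 < fY y} := by
      rw [hSeq]; exact measurableSet_le hfYc.measurable measurable_const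
    rw [ae_iff]
    have hpre : {ω | ¬ 0 < fY (Y ω)} = Y ⁻¹' {y | ¬ 0 < fY y} := rfl
    rw [hpre, ← Measure.map_apply hY hSmeas, hYlaw, withDensity_apply _ hSmeas]
    have hzero : ∀ᵐ y ∂volume, y ∈ {y : Ed d | ¬ 0 < fY y} →
        ENNReal.ofReal (fY y) = (fun _ => (0 : ℝ≥0∞)) y := by
      refine ae_of_all _ fun y hy => ?_
      exact ENNReal.ofReal_eq_zero.mpr (not_lt.mp hy)
    rw [setLIntegral_congr_fun_ae hSmeas hzero]
    simp
  -- Part 3: conditional expectation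
  have hm : MeasurableSpace.comap Y inferInstance ≤ _ := hY.comap_le
  haveI : IsFiniteMeasure (P.trim hm) := isFiniteMeasure_trim hm
  have hgX : Integrable (fun ω => g (X ω)) P :=
    (integrable_map_measure hg.aestronglyMeasurable hX.aemeasurable).mp hgint
  have hdiv : ∀ y, (fY y).toNNReal • (Ng y / fY y) = Ng y := by
    intro y
    rcases eq_or_lt_of_le (hfYnn y) with h | h
    · rw [← h]; simp [hNg0 y h.symm]
    · rw [NNReal.smul_def, Real.coe_toNNReal _ (hfYnn y), smul_eq_mul,
        mul_div_cancel₀ _ (ne_of_gt h)]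
  have hfYtoNN : Measurable fun y => (fY y).toNNReal := hfYc.measurable.real_toNNReal
  have hcandY : Integrable (fun y => Ng y / fY y) (Measure.map Y P) := by
    rw [hYlaw]
    rw [show (fun y => ENNReal.ofReal (fY y)) = fun y => (((fY y).toNNReal : ℝ≥0) : ℝ≥0∞)
      from rfl]
    rw [integrable_withDensity_iff_integrable_smul hfYtoNN]
    rw [show (fun y => (fY y).toNNReal • (Ng y / fY y)) = Ng from funext hdiv]
    exact hNgInt
  have hcand : Integrable (fun ω => Ng (Y ω) / fY (Y ω)) P :=
    (integrable_map_measure hcandY.aestronglyMeasurable hY.aemeasurable).mp hcandY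
  -- set-integral identities
  have hRHS : ∀ B : Set (Ed d), MeasurableSet B →
      ∫ ω in Y ⁻¹' B, g (X ω) ∂P = ∫ y in B, Ng y ∂volume := by
    intro B hB
    set gp : Ed d → ℝ≥0∞ := fun x => ENNReal.ofReal (g x) with hgp
    set gm : Ed d → ℝ≥0∞ := fun x => ENNReal.ofReal (-g x) with hgm
    have hgpm : Measurable gp := ENNReal.measurable_ofReal.comp hg
    have hgmm : Measurable gm := ENNReal.measurable_ofReal.comp hg.neg
    set Ap : Ed d → ℝ≥0∞ :=
      fun y => ∫⁻ x, gp x * ENNReal.ofReal (fV (y - x)) ∂(Measure.map X P) with hAp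
    set Am : Ed d → ℝ≥0∞ :=
      fun y => ∫⁻ x, gm x * ENNReal.ofReal (fV (y - x)) ∂(Measure.map X P) with hAm
    have hApm : Measurable Ap := by
      refine Measurable.lintegral_prod_right ?_
      exact (hgpm.comp measurable_snd).mul
        (ENNReal.measurable_ofReal.comp (hfVm.comp (measurable_fst.sub measurable_snd)))
    have hAmm : Measurable Am := by
      refine Measurable.lintegral_prod_right ?_
      exact (hgmm.comp measurable_snd).mul
        (ENNReal.measurable_ofReal.comp (hfVm.comp (measurable_fst.sub measurable_snd)))
    have hkeyp := keyΩ gp hgpm B hB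
    have hkeym := keyΩ gm hgmm B hB
    have hfinP : ∀ h₀ : Ed d → ℝ, (∀ x, ENNReal.ofReal (h₀ x) ≤ (‖g x‖₊ : ℝ≥0∞)) →
        (∫⁻ ω in Y ⁻¹' B, ENNReal.ofReal (h₀ (X ω)) ∂P) ≠ ⊤ := by
      intro h₀ hh₀
      refine ne_of_lt (lt_of_le_of_lt (setLIntegral_le_lintegral _ _) ?_)
      refine lt_of_le_of_lt (lintegral_mono fun ω => hh₀ (X ω)) ?_
      exact hgX.2
    have hfinp : (∫⁻ y in B, Ap y ∂volume) ≠ ⊤ := by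
      rw [← hkeyp]
      exact hfinP g fun x => Real.ofReal_le_enorm _
    have hfinm : (∫⁻ y in B, Am y ∂volume) ≠ ⊤ := by
      rw [← hkeym]
      refine hfinP (fun x => -g x) fun x => ?_
      refine le_trans (Real.ofReal_le_enorm _) (le_of_eq ?_)
      rw [enorm_neg]
      rfl
    have hNgrep : ∀ y, Ng y = (Ap y).toReal - (Am y).toReal := by
      intro y
      have hint : Integrable (fun x => g x * fV (y - x)) (Measure.map X P) := by
        refine Integrable.mono' (hgint.norm.mul_const CV)
          (hg.aestronglyMeasurable.mul
            ((hfVm.comp (measurable_const.sub measurable_id)).aestronglyMeasurable))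
          (ae_of_all _ fun x => ?_)
        rw [norm_mul]
        exact mul_le_mul_of_nonneg_left (hCV' _) (norm_nonneg _)
      have h1 : Ng y = ∫ x, g x * fV (y - x) ∂(Measure.map X P) := by rw [hNg]
      rw [h1, integral_eq_lintegral_pos_part_sub_lintegral_neg_part hint]
      congr 1
      · congr 1
        refine lintegral_congr fun x => ?_
        exact ENNReal.ofReal_mul' (hfVnn _)
      · congr 1
        refine lintegral_congr fun x => ?_
        rw [show -(g x * fV (y - x)) = (-g x) * fV (y - x) by ring]
        exact ENNReal.ofReal_mul' (hfVnn _)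
    have hApInt : IntegrableOn (fun y => (Ap y).toReal) B volume :=
      integrable_toReal_of_lintegral_ne_top hApm.aemeasurable.restrict hfinp
    have hAmInt : IntegrableOn (fun y => (Am y).toReal) B volume :=
      integrable_toReal_of_lintegral_ne_top hAmm.aemeasurable.restrict hfinm
    calc ∫ ω in Y ⁻¹' B, g (X ω) ∂P
        = (∫⁻ ω in Y ⁻¹' B, ENNReal.ofReal (g (X ω)) ∂P).toReal
          - (∫⁻ ω in Y ⁻¹' B, ENNReal.ofReal (-g (X ω)) ∂P).toReal :=
          integral_eq_lintegral_pos_part_sub_lintegral_neg_part hgX.integrableOn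
      _ = (∫⁻ y in B, Ap y ∂volume).toReal - (∫⁻ y in B, Am y ∂volume).toReal := by
          rw [hkeyp, hkeym]
      _ = ∫ y in B, Ng y ∂volume := by
          rw [show (∫ y in B, Ng y ∂volume) = ∫ y in B, ((Ap y).toReal - (Am y).toReal) ∂volume
            from setIntegral_congr_fun hB (fun y _ => hNgrep y)]
          rw [integral_sub hApInt hAmInt]
          rw [integral_toReal hApm.aemeasurable.restrict
            (ae_lt_top' hApm.aemeasurable.restrict hfinp)]
          rw [integral_toReal hAmm.aemeasurable.restrict
            (ae_lt_top' hAmm.aemeasurable.restrict hfinm)]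
  have hLHS : ∀ B : Set (Ed d), MeasurableSet B →
      ∫ ω in Y ⁻¹' B, Ng (Y ω) / fY (Y ω) ∂P = ∫ y in B, Ng y ∂volume := by
    intro B hB
    have h := setIntegral_map hB hcandY.aestronglyMeasurable hY.aemeasurable
    rw [← h, hYlaw]
    rw [show (fun y => ENNReal.ofReal (fY y)) = fun y => (((fY y).toNNReal : ℝ≥0) : ℝ≥0∞)
      from rfl]
    rw [setIntegral_withDensity_eq_setIntegral_smul hfYtoNN _ hB]
    exact setIntegral_congr_fun hB fun y _ => hdiv y
  have hmeas' : AEStronglyMeasurable[MeasurableSpace.comap Y inferInstance]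
      (fun ω => Ng (Y ω) / fY (Y ω)) P := by
    have hYm : Measurable[MeasurableSpace.comap Y inferInstance] Y := fun s hs => ⟨s, hs, rfl⟩
    exact (((hNgc.measurable.div hfYc.measurable).comp hYm).stronglyMeasurable).aestronglyMeasurable
  have hfinal := ae_eq_condExp_of_forall_setIntegral_eq hm hgX
    (fun s _ _ => hcand.integrableOn)
    (fun s hs _ => by
      obtain ⟨B, hB, rfl⟩ := hs
      rw [hLHS B hB, hRHS B hB]) hmeas'
  exact ⟨part1, part2, hfinal.symm⟩


end
end
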